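/- arXiv:2105.01233 — 6 statements merged into one kernel-verified Lean document; each statement's English description precedes it below -/
import Mathlib

section
/- Theorem 1 (revenue adequacy of the chance-constrained pricing scheme). Let the primal variables (p_i, r_i^u, r_i^d, α_i^u, α_i^d, w_n^{sch}, w_n^{spi}, β_n, δ_n^0, δ_n, s_j, γ_j) form an optimal solution of the DCCO linear program and let (λ_n, ν_n, κ_n, μ_n, ρ_i, y_n^{spi}, x_n^{spi}, y_i^u, x_i^u, y_i^d, x_i^d, y_i, x_i, y_j^s, x_j^s) form an optimal solution of its linear programming dual (equivalently, the pair satisfies primal feasibility, dual feasibility and complementary slackness for the DCCO LP). Assume Σ_{j∈𝓙}(L_j − s_j) > 0. Then under the chance-constrained pricing scheme: (i) the market administrator's expected profit is nonnegative: Γ^o := Σ_{n∈𝓑} λ_n(Σ_{j∈𝓙_n} L_j − Σ_{i∈𝓘_n} p_i − w_n^{sch}) − Σ_{n∈𝓑} ν_n(Σ_{i∈𝓘_n}(r_i^u − r_i^d) + Σ_{j∈𝓙_n} s_j + W_n^f − w_n^{sch} − w_n^{spi}) − Σ_{n∈𝓑}(Σ_{i∈𝓘_n}(τ_i^u r_i^u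 + τ_i^d r_i^d) − (y_n^{spi} − x_n^{spi})(W_n^f − w_n^{spi})) + ζ·Σ_{j∈𝓙}(L_j − s_j) ≥ 0; (ii) every VRES generator recovers its cost in expectation: for all n∈𝓑, Γ^{w_n} := (λ_n − ν_n)w_n^{sch} + (C_n^w − ν_n + y_n^{spi} − x_n^{spi})w_n^{spi} + (ν_n − y_n^{spi} + x_n^{spi} − C_n^w)W_n^f ≥ 0; (iii) every conventional generator recovers its cost in expectation: for all i∈𝓘, Γ^{g_i} := (λ_{b(i)} − C_i)p_i + (ν_{b(i)} − C_i^u)r_i^u + (C_i^d − ν_{b(i)})r_i^d + τ_i^u r_i^u + τ_i^d r_i^d ≥ 0. -/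
open Finset

/-- Regroup a bus-indexed sum of edge sums into a single edge sum. -/
lemma sum_bus_edge {Bus : Type*} [Fintype Bus] [DecidableEq Bus]
    (Lines : Finset (Bus × Bus)) (pr : Bus × Bus → Bus)
    (f : Bus → ℝ) (g : Bus → Bus × Bus → ℝ) :
    ∑ n : Bus, f n * ∑ e ∈ Lines.filter (fun e => pr e = n), g n e
      = ∑ e ∈ Lines, f (pr e) * g (pr e) e := by
  rw [← Finset.sum_fiberwise Lines pr (fun e => f (pr e) * g (pr e) e)]
  refine Finset.sum_congr rfl fun n _ => ?_
  rw [Finset.mul_sum]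
  refine Finset.sum_congr rfl fun e he => ?_
  rw [(Finset.mem_filter.1 he).2]

/-- Theorem 1: revenue adequacy of the chance-constrained pricing scheme.
The hypotheses encode an optimal primal-dual pair of the DCCO linear program via
primal feasibility, dual feasibility, and complementary slackness. -/
theorem cco_pricing_revenue_adequacy
    {Bus Gen Load : Type*} [Fintype Bus] [Fintype Gen] [Fintype Load] [DecidableEq Bus]
    (bI : Gen → Bus) (bJ : Load → Bus)
    (Lines : Finset (Bus × Bus))
    (Bsus : Bus → Bus → ℝ) (Cap : Bus × Bus → ℝ) (hCap : ∀ e ∈ Lines, 0 ≤ Cap e)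
    (C Cu Cd : Gen → ℝ) (Cw : Bus → ℝ) (V : Load → ℝ)
    (Ld : Load → ℝ) (hLd : ∀ j, 0 ≤ Ld j)
    (Pbar Rubar Rdbar : Gen → ℝ)
    (hPbar : ∀ i, 0 ≤ Pbar i) (hRubar : ∀ i, 0 ≤ Rubar i) (hRdbar : ∀ i, 0 ≤ Rdbar i)
    (Wf Wbar : Bus → ℝ) (hWf : ∀ n, 0 ≤ Wf n) (hWbar : ∀ n, 0 ≤ Wbar n)
    (σ : Bus → ℝ) (hσ : ∀ n, 0 < σ n) (q : ℝ) (hq : 0 < q)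
    -- primal variables
    (p ru rd au ad : Gen → ℝ) (wsch wspi β δ0 δ : Bus → ℝ) (s γ : Load → ℝ)
    -- dual variables
    (lam nu kap mu yspi xspi : Bus → ℝ)
    (ρ yu xu yd xd yy xx : Gen → ℝ) (ys xs : Load → ℝ)
    (η0 η : Bus × Bus → ℝ)
    -- primal feasibility: nonnegativity
    (hp : ∀ i, 0 ≤ p i) (hru : ∀ i, 0 ≤ ru i) (hrd : ∀ i, 0 ≤ rd i)
    (hau : ∀ i, 0 ≤ au i) (had : ∀ i, 0 ≤ ad i)
    (hwsch : ∀ n, 0 ≤ wsch n) (hwspi : ∀ n, 0 ≤ wspi n) (hβ : ∀ n, 0 ≤ β n)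
    (hs : ∀ j, 0 ≤ s j) (hγ : ∀ j, 0 ≤ γ j)
    -- primal feasibility: scheduling-stage balance
    (hbal0 : ∀ n, (∑ i ∈ univ.filter (fun i => bI i = n), p i) + wsch n
        - (∑ e ∈ Lines.filter (fun e => e.1 = n), Bsus e.1 e.2 * (δ0 e.1 - δ0 e.2))
        = ∑ j ∈ univ.filter (fun j => bJ j = n), Ld j)
    -- primal feasibility: real-time balance
    (hbal1 : ∀ n, (∑ i ∈ univ.filter (fun i => bI i = n), (ru i - rd i))
        + (∑ j ∈ univ.filter (fun j => bJ j = n), s j)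
        + (Wf n - wsch n - wspi n)
        + (∑ e ∈ Lines.filter (fun e => e.1 = n),
            Bsus e.1 e.2 * (δ0 e.1 - δ e.1 - δ0 e.2 + δ e.2)) = 0)
    -- primal feasibility: participation
    (hpart : ∀ n, (∑ i ∈ univ.filter (fun i => bI i = n), (au i + ad i))
        + (∑ j ∈ univ.filter (fun j => bJ j = n), γ j) + β n = 1)
    -- primal feasibility: line limits
    (hline0 : ∀ e ∈ Lines, Bsus e.1 e.2 * (δ0 e.1 - δ0 e.2) ≤ Cap e)
    (hline1 : ∀ e ∈ Lines, Bsus e.1 e.2 * (δ e.1 - δ e.2) ≤ Cap e)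
    -- primal feasibility: bounds
    (hwschU : ∀ n, wsch n ≤ Wbar n)
    (hpU : ∀ i, p i ≤ Pbar i)
    (hspiL : ∀ n, wspi n - β n * (q * σ n) ≥ 0)
    (hspiU : ∀ n, Wf n - wspi n - (1 - β n) * (q * σ n) ≥ 0)
    (hruL : ∀ i, ru i - au i * (q * σ (bI i)) ≥ 0)
    (hruU : ∀ i, Rubar i - ru i - au i * (q * σ (bI i)) ≥ 0)
    (hrdL : ∀ i, rd i - ad i * (q * σ (bI i)) ≥ 0)
    (hrdU : ∀ i, Rdbar i - rd i - ad i * (q * σ (bI i)) ≥ 0)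
    (hcapL : ∀ i, p i + ru i - rd i - (au i + ad i) * (q * σ (bI i)) ≥ 0)
    (hcapU : ∀ i, Pbar i - p i - ru i + rd i - (au i + ad i) * (q * σ (bI i)) ≥ 0)
    (hsL : ∀ j, s j - γ j * (q * σ (bJ j)) ≥ 0)
    (hsU : ∀ j, Ld j - s j - γ j * (q * σ (bJ j)) ≥ 0)
    -- dual feasibility: nonnegativity of inequality duals
    (hmu : ∀ n, 0 ≤ mu n) (hρ : ∀ i, 0 ≤ ρ i)
    (hyspi : ∀ n, 0 ≤ yspi n) (hxspi : ∀ n, 0 ≤ xspi n)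
    (hyu : ∀ i, 0 ≤ yu i) (hxu : ∀ i, 0 ≤ xu i)
    (hyd : ∀ i, 0 ≤ yd i) (hxd : ∀ i, 0 ≤ xd i)
    (hyy : ∀ i, 0 ≤ yy i) (hxx : ∀ i, 0 ≤ xx i)
    (hys : ∀ j, 0 ≤ ys j) (hxs : ∀ j, 0 ≤ xs j)
    (hη0 : ∀ e ∈ Lines, 0 ≤ η0 e) (hη : ∀ e ∈ Lines, 0 ≤ η e)
    -- dual feasibility: one dual constraint per primal variable
    (dfp : ∀ i, 0 ≤ C i - lam (bI i) + ρ i - yy i + xx i)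
    (dfru : ∀ i, 0 ≤ Cu i - nu (bI i) - yu i + xu i - yy i + xx i)
    (dfrd : ∀ i, 0 ≤ -Cd i + nu (bI i) - yd i + xd i + yy i - xx i)
    (dfau : ∀ i, 0 ≤ -kap (bI i) + (q * σ (bI i)) * (yu i + xu i + yy i + xx i))
    (dfad : ∀ i, 0 ≤ -kap (bI i) + (q * σ (bI i)) * (yd i + xd i + yy i + xx i))
    (dfwsch : ∀ n, 0 ≤ -lam n + nu n + mu n)
    (dfwspi : ∀ n, 0 ≤ -Cw n + nu n - yspi n + xspi n)
    (dfβ : ∀ n, 0 ≤ -kap n + (q * σ n) * (yspi n - xspi n))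
    (dfs : ∀ j, 0 ≤ V j - nu (bJ j) - ys j + xs j)
    (dfγ : ∀ j, 0 ≤ -kap (bJ j) + (q * σ (bJ j)) * (ys j + xs j))
    (dfδ0 : ∀ n, (∑ e ∈ Lines.filter (fun e => e.1 = n),
          Bsus e.1 e.2 * (lam n - nu n + η0 e))
        - (∑ e ∈ Lines.filter (fun e => e.2 = n),
          Bsus e.1 e.2 * (lam e.1 - nu e.1 + η0 e)) = 0)
    (dfδ : ∀ n, (∑ e ∈ Lines.filter (fun e => e.1 = n), Bsus e.1 e.2 * (nu n + η e))
        - (∑ e ∈ Lines.filter (fun e => e.2 = n), Bsus e.1 e.2 * (nu e.1 + η e)) = 0)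
    -- complementary slackness: dual variable times primal slack
    (csρ : ∀ i, ρ i * (Pbar i - p i) = 0)
    (csmu : ∀ n, mu n * (Wbar n - wsch n) = 0)
    (csyspi : ∀ n, yspi n * (wspi n - β n * (q * σ n)) = 0)
    (csxspi : ∀ n, xspi n * (Wf n - wspi n - (1 - β n) * (q * σ n)) = 0)
    (csyu : ∀ i, yu i * (ru i - au i * (q * σ (bI i))) = 0)
    (csxu : ∀ i, xu i * (Rubar i - ru i - au i * (q * σ (bI i))) = 0)
    (csyd : ∀ i, yd i * (rd i - ad i * (q * σ (bI i))) = 0)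
    (csxd : ∀ i, xd i * (Rdbar i - rd i - ad i * (q * σ (bI i))) = 0)
    (csyy : ∀ i, yy i * (p i + ru i - rd i - (au i + ad i) * (q * σ (bI i))) = 0)
    (csxx : ∀ i, xx i * (Pbar i - p i - ru i + rd i - (au i + ad i) * (q * σ (bI i))) = 0)
    (csys : ∀ j, ys j * (s j - γ j * (q * σ (bJ j))) = 0)
    (csxs : ∀ j, xs j * (Ld j - s j - γ j * (q * σ (bJ j))) = 0)
    (csη0 : ∀ e ∈ Lines, η0 e * (Cap e - Bsus e.1 e.2 * (δ0 e.1 - δ0 e.2)) = 0)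
    (csη : ∀ e ∈ Lines, η e * (Cap e - Bsus e.1 e.2 * (δ e.1 - δ e.2)) = 0)
    -- complementary slackness: primal variable times dual slack
    (dsp : ∀ i, p i * (C i - lam (bI i) + ρ i - yy i + xx i) = 0)
    (dsru : ∀ i, ru i * (Cu i - nu (bI i) - yu i + xu i - yy i + xx i) = 0)
    (dsrd : ∀ i, rd i * (-Cd i + nu (bI i) - yd i + xd i + yy i - xx i) = 0)
    (dsau : ∀ i, au i * (-kap (bI i) + (q * σ (bI i)) * (yu i + xu i + yy i + xx i)) = 0)
    (dsad : ∀ i, ad i * (-kap (bI i) + (q * σ (bI i)) * (yd i + xd i + yy i + xx i)) = 0)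
    (dswsch : ∀ n, wsch n * (-lam n + nu n + mu n) = 0)
    (dswspi : ∀ n, wspi n * (-Cw n + nu n - yspi n + xspi n) = 0)
    (dsβ : ∀ n, β n * (-kap n + (q * σ n) * (yspi n - xspi n)) = 0)
    (dss : ∀ j, s j * (V j - nu (bJ j) - ys j + xs j) = 0)
    (dsγ : ∀ j, γ j * (-kap (bJ j) + (q * σ (bJ j)) * (ys j + xs j)) = 0)
    -- positive net scheduled consumption (Assumption 1(ii))
    (hdem : 0 < ∑ j : Load, (Ld j - s j))
    -- reserve price adders and load surcharge of the pricing scheme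
    (τu τd : Gen → ℝ)
    (hτu : ∀ i, τu i = if 0 ≤ kap (bI i) - (q * σ (bI i)) * yu i
        then kap (bI i) / (q * σ (bI i)) else yu i)
    (hτd : ∀ i, τd i = if 0 ≤ kap (bI i) - (q * σ (bI i)) * yd i
        then kap (bI i) / (q * σ (bI i)) else yd i)
    (ζ : ℝ)
    (hζ : ζ = (∑ n : Bus, ((∑ i ∈ univ.filter (fun i => bI i = n), (τu i * ru i + τd i * rd i))
          - (yspi n - xspi n) * (Wf n - wspi n)))
        / (∑ j : Load, (Ld j - s j))) :
    -- (i) revenue adequacy in expectation of the market administrator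
    (0 ≤ (∑ n : Bus, lam n * ((∑ j ∈ univ.filter (fun j => bJ j = n), Ld j)
            - (∑ i ∈ univ.filter (fun i => bI i = n), p i) - wsch n))
        - (∑ n : Bus, nu n * ((∑ i ∈ univ.filter (fun i => bI i = n), (ru i - rd i))
            + (∑ j ∈ univ.filter (fun j => bJ j = n), s j) + Wf n - wsch n - wspi n))
        - (∑ n : Bus, ((∑ i ∈ univ.filter (fun i => bI i = n), (τu i * ru i + τd i * rd i))
            - (yspi n - xspi n) * (Wf n - wspi n)))
        + ζ * (∑ j : Load, (Ld j - s j)))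
    -- (ii) cost recovery in expectation of every VRES generator
    ∧ (∀ n : Bus, 0 ≤ (lam n - nu n) * wsch n
        + (Cw n - nu n + yspi n - xspi n) * wspi n
        + (nu n - yspi n + xspi n - Cw n) * Wf n)
    -- (iii) cost recovery in expectation of every conventional generator
    ∧ (∀ i : Gen, 0 ≤ (lam (bI i) - C i) * p i + (nu (bI i) - Cu i) * ru i
        + (Cd i - nu (bI i)) * rd i + τu i * ru i + τd i * rd i) := by
  refine ⟨?_, ?_, ?_⟩
  · -- (i) revenue adequacy of the market administrator
    set T0 : Bus × Bus → ℝ := fun e => Bsus e.1 e.2 * (δ0 e.1 - δ0 e.2) with hT0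
    set T1 : Bus × Bus → ℝ := fun e => Bsus e.1 e.2 * (δ e.1 - δ e.2) with hT1
    have hZ : ζ * (∑ j : Load, (Ld j - s j))
        = ∑ n : Bus, ((∑ i ∈ univ.filter (fun i => bI i = n), (τu i * ru i + τd i * rd i))
            - (yspi n - xspi n) * (Wf n - wspi n)) := by
      rw [hζ, div_mul_cancel₀ _ (ne_of_gt hdem)]
    -- scheduling-stage payments equal minus congestion flows at δ0
    have hA : (∑ n : Bus, lam n * ((∑ j ∈ univ.filter (fun j => bJ j = n), Ld j)
            - (∑ i ∈ univ.filter (fun i => bI i = n), p i) - wsch n))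
        = -∑ e ∈ Lines, lam e.1 * T0 e := by
      rw [← sum_bus_edge Lines Prod.fst lam (fun _ e => T0 e), ← Finset.sum_neg_distrib]
      refine Finset.sum_congr rfl fun n _ => ?_
      have := hbal0 n
      have hin : (∑ j ∈ univ.filter (fun j => bJ j = n), Ld j)
          - (∑ i ∈ univ.filter (fun i => bI i = n), p i) - wsch n
          = -(∑ e ∈ Lines.filter (fun e => e.1 = n), T0 e) := by
        simp only [hT0]; linarith
      rw [hin]; ring
    have hB : (∑ n : Bus, nu n * ((∑ i ∈ univ.filter (fun i => bI i = n), (ru i - rd i))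
            + (∑ j ∈ univ.filter (fun j => bJ j = n), s j) + Wf n - wsch n - wspi n))
        = -∑ e ∈ Lines, nu e.1 * (T0 e - T1 e) := by
      rw [← sum_bus_edge Lines Prod.fst nu (fun _ e => T0 e - T1 e), ← Finset.sum_neg_distrib]
      refine Finset.sum_congr rfl fun n _ => ?_
      have h1 := hbal1 n
      have hflow : (∑ e ∈ Lines.filter (fun e => e.1 = n),
            Bsus e.1 e.2 * (δ0 e.1 - δ e.1 - δ0 e.2 + δ e.2))
          = ∑ e ∈ Lines.filter (fun e => e.1 = n), (T0 e - T1 e) := by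
        refine Finset.sum_congr rfl fun e _ => by simp only [hT0, hT1]; ring
      have hin : (∑ i ∈ univ.filter (fun i => bI i = n), (ru i - rd i))
          + (∑ j ∈ univ.filter (fun j => bJ j = n), s j) + Wf n - wsch n - wspi n
          = -(∑ e ∈ Lines.filter (fun e => e.1 = n), (T0 e - T1 e)) := by
        rw [← hflow]; linarith
      rw [hin]; ring
    -- dual constraints for δ0 summed with weights δ0
    have E0 : ∑ e ∈ Lines, (lam e.1 - nu e.1 + η0 e) * T0 e = 0 := by
      have h := Finset.sum_eq_zero (s := (univ : Finset Bus))
        (f := fun n => δ0 n * ((∑ e ∈ Lines.filter (fun e => e.1 = n),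
            Bsus e.1 e.2 * (lam n - nu n + η0 e))
          - (∑ e ∈ Lines.filter (fun e => e.2 = n),
            Bsus e.1 e.2 * (lam e.1 - nu e.1 + η0 e))))
        (fun n _ => by linear_combination δ0 n * dfδ0 n)
      have hsplit : ∑ n : Bus, δ0 n * ((∑ e ∈ Lines.filter (fun e => e.1 = n),
            Bsus e.1 e.2 * (lam n - nu n + η0 e))
          - (∑ e ∈ Lines.filter (fun e => e.2 = n),
            Bsus e.1 e.2 * (lam e.1 - nu e.1 + η0 e)))
          = (∑ n : Bus, δ0 n * ∑ e ∈ Lines.filter (fun e => e.1 = n),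
              Bsus e.1 e.2 * (lam n - nu n + η0 e))
          - (∑ n : Bus, δ0 n * ∑ e ∈ Lines.filter (fun e => e.2 = n),
              Bsus e.1 e.2 * (lam e.1 - nu e.1 + η0 e)) := by
        rw [← Finset.sum_sub_distrib]
        exact Finset.sum_congr rfl fun n _ => by ring
      rw [hsplit,
        sum_bus_edge Lines Prod.fst δ0 (fun n e => Bsus e.1 e.2 * (lam n - nu n + η0 e)),
        sum_bus_edge Lines Prod.snd δ0 (fun _ e => Bsus e.1 e.2 * (lam e.1 - nu e.1 + η0 e)),
        ← Finset.sum_sub_distrib] at h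
      rw [← h]
      exact Finset.sum_congr rfl fun e _ => by simp only [hT0]; ring
    -- dual constraints for δ summed with weights δ
    have E1 : ∑ e ∈ Lines, (nu e.1 + η e) * T1 e = 0 := by
      have h := Finset.sum_eq_zero (s := (univ : Finset Bus))
        (f := fun n => δ n * ((∑ e ∈ Lines.filter (fun e => e.1 = n),
            Bsus e.1 e.2 * (nu n + η e))
          - (∑ e ∈ Lines.filter (fun e => e.2 = n),
            Bsus e.1 e.2 * (nu e.1 + η e))))
        (fun n _ => by linear_combination δ n * dfδ n)
      have hsplit : ∑ n : Bus, δ n * ((∑ e ∈ Lines.filter (fun e => e.1 = n),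
            Bsus e.1 e.2 * (nu n + η e))
          - (∑ e ∈ Lines.filter (fun e => e.2 = n),
            Bsus e.1 e.2 * (nu e.1 + η e)))
          = (∑ n : Bus, δ n * ∑ e ∈ Lines.filter (fun e => e.1 = n),
              Bsus e.1 e.2 * (nu n + η e))
          - (∑ n : Bus, δ n * ∑ e ∈ Lines.filter (fun e => e.2 = n),
              Bsus e.1 e.2 * (nu e.1 + η e)) := by
        rw [← Finset.sum_sub_distrib]
        exact Finset.sum_congr rfl fun n _ => by ring
      rw [hsplit,
        sum_bus_edge Lines Prod.fst δ (fun n e => Bsus e.1 e.2 * (nu n + η e)),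
        sum_bus_edge Lines Prod.snd δ (fun _ e => Bsus e.1 e.2 * (nu e.1 + η e)),
        ← Finset.sum_sub_distrib] at h
      rw [← h]
      exact Finset.sum_congr rfl fun e _ => by simp only [hT1]; ring
    -- congestion rent is nonnegative
    have key : -(∑ e ∈ Lines, lam e.1 * T0 e) + (∑ e ∈ Lines, nu e.1 * (T0 e - T1 e))
        = ∑ e ∈ Lines, (η0 e * Cap e + η e * Cap e) := by
      have h2 : ∑ e ∈ Lines, (η0 e * Cap e + η e * Cap e)
          = ∑ e ∈ Lines, (η0 e * T0 e + η e * T1 e) := by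
        refine Finset.sum_congr rfl fun e he => ?_
        have h0 := csη0 e he
        have h1 := csη e he
        simp only [hT0, hT1]
        nlinarith [h0, h1]
      calc -(∑ e ∈ Lines, lam e.1 * T0 e) + (∑ e ∈ Lines, nu e.1 * (T0 e - T1 e))
          = ∑ e ∈ Lines, (nu e.1 * (T0 e - T1 e) - lam e.1 * T0 e) := by
            rw [Finset.sum_sub_distrib]; ring
        _ = ∑ e ∈ Lines, ((η0 e * T0 e + η e * T1 e)
              - (lam e.1 - nu e.1 + η0 e) * T0 e - (nu e.1 + η e) * T1 e) :=
            Finset.sum_congr rfl fun e _ => by ring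
        _ = (∑ e ∈ Lines, (η0 e * T0 e + η e * T1 e))
              - (∑ e ∈ Lines, (lam e.1 - nu e.1 + η0 e) * T0 e)
              - (∑ e ∈ Lines, (nu e.1 + η e) * T1 e) := by
            rw [Finset.sum_sub_distrib, Finset.sum_sub_distrib]
        _ = ∑ e ∈ Lines, (η0 e * Cap e + η e * Cap e) := by rw [E0, E1, h2]; ring
    have hnonneg : 0 ≤ ∑ e ∈ Lines, (η0 e * Cap e + η e * Cap e) :=
      Finset.sum_nonneg fun e he => by
        have := hCap e he
        have := hη0 e he
        have := hη e he
        positivity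
    rw [hA, hB, hZ]
    linarith [key, hnonneg]
  · -- (ii) cost recovery of VRES generators
    intro n
    have h1 := dswsch n
    have h2 := dswspi n
    have h3 := mul_nonneg (dfwspi n) (hWf n)
    have h4 := mul_nonneg (hmu n) (hwsch n)
    nlinarith [h1, h2, h3, h4]
  · -- (iii) cost recovery of conventional generators
    intro i
    have hσ'pos : 0 < q * σ (bI i) := mul_pos hq (hσ (bI i))
    -- the reserve adders dominate the participation payments
    have hTu : kap (bI i) * au i ≤ τu i * ru i := by
      rw [hτu i]
      split_ifs with hcase
      · have hκ : 0 ≤ kap (bI i) := by nlinarith [mul_nonneg hσ'pos.le (hyu i)]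
        have h5 : au i * (q * σ (bI i)) ≤ ru i := by linarith [hruL i]
        have h6 : kap (bI i) * (au i * (q * σ (bI i))) ≤ kap (bI i) * ru i :=
          mul_le_mul_of_nonneg_left h5 hκ
        rw [div_mul_eq_mul_div, le_div_iff₀ hσ'pos]
        nlinarith [h6]
      · push_neg at hcase
        have h6 : au i * (kap (bI i)) ≤ au i * ((q * σ (bI i)) * yu i) :=
          mul_le_mul_of_nonneg_left (le_of_lt (by linarith)) (hau i)
        nlinarith [csyu i, h6]
    have hTd : kap (bI i) * ad i ≤ τd i * rd i := by
      rw [hτd i]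
      split_ifs with hcase
      · have hκ : 0 ≤ kap (bI i) := by nlinarith [mul_nonneg hσ'pos.le (hyd i)]
        have h5 : ad i * (q * σ (bI i)) ≤ rd i := by linarith [hrdL i]
        have h6 : kap (bI i) * (ad i * (q * σ (bI i))) ≤ kap (bI i) * rd i :=
          mul_le_mul_of_nonneg_left h5 hκ
        rw [div_mul_eq_mul_div, le_div_iff₀ hσ'pos]
        nlinarith [h6]
      · push_neg at hcase
        have h6 : ad i * (kap (bI i)) ≤ ad i * ((q * σ (bI i)) * yd i) :=
          mul_le_mul_of_nonneg_left (le_of_lt (by linarith)) (had i)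
        nlinarith [csyd i, h6]
    -- rewrite the profit using complementary slackness
    have key : (lam (bI i) - C i) * p i + (nu (bI i) - Cu i) * ru i
        + (Cd i - nu (bI i)) * rd i + τu i * ru i + τd i * rd i
        = ρ i * p i + xu i * ru i + xd i * rd i + xx i * Pbar i
          + au i * (q * σ (bI i)) * xu i + ad i * (q * σ (bI i)) * xd i
          + (τu i * ru i - kap (bI i) * au i) + (τd i * rd i - kap (bI i) * ad i) := by
      linear_combination (-1 : ℝ) * dsp i - dsru i - dsrd i - dsau i - dsad i
        - csyu i - csyd i - csyy i - csxx i
    rw [key]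
    have n1 : 0 ≤ ρ i * p i := mul_nonneg (hρ i) (hp i)
    have n2 : 0 ≤ xu i * ru i := mul_nonneg (hxu i) (hru i)
    have n3 : 0 ≤ xd i * rd i := mul_nonneg (hxd i) (hrd i)
    have n4 : 0 ≤ xx i * Pbar i := mul_nonneg (hxx i) (hPbar i)
    have n5 : 0 ≤ au i * (q * σ (bI i)) * xu i :=
      mul_nonneg (mul_nonneg (hau i) hσ'pos.le) (hxu i)
    have n6 : 0 ≤ ad i * (q * σ (bI i)) * xd i :=
      mul_nonneg (mul_nonneg (had i) hσ'pos.le) (hxd i)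
    linarith
end

section
/- Revenue adequacy of the market administrator (Section 4.1). Let 𝓑, 𝓘, 𝓙, 𝓛 and location maps b be as in the setup, with susceptances B_{nl} and line capacities C̄_{kl} ≥ 0 for (k,l)∈𝓛, loads L_j, and forecasts W_n^f. Let λ_n, ν_n, a_n (n∈𝓑), t_i^u, t_i^d (i∈𝓘) be real numbers, and let p_i, r_i^u, r_i^d, w_n^{sch}, w_n^{spi}, s_j, δ_n^0, δ_n be real numbers satisfying, for every n∈𝓑, the scheduling balance Σ_{i∈𝓘_n} p_i + w_n^{sch} − Σ_{(n,l)∈𝓛} B_{nl}(δ_n^0 − δ_l^0) = Σ_{j∈𝓙_n} L_j and the real-time balance Σ_{i∈𝓘_n}(r_i^u − r_i^d) + Σ_{j∈𝓙_n} s_j + (W_n^f − w_n^{sch} − w_n^{spi}) + Σ_{(n,l)∈𝓛} B_{nl}(δ_n^0 − δ_n − δ_l^0 + δ_l) = 0. Assume Σ_{j∈𝓙}(L_j − s_j) > 0 and define ζ := [Σ_{n∈𝓑}(Σ_{i∈𝓘_n}(t_i^u r_i^u + t_i^d r_i^d) − a_n(W_n^f − w_n^{spi}))]/[Σ_{j∈𝓙}(L_j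 − s_j)]. Suppose further that the pair (δ^0, δ) minimizes the linear function g(θ^0, θ) := Σ_{n∈𝓑}[λ_n Σ_{(n,l)∈𝓛} B_{nl}(θ_n^0 − θ_l^0) − ν_n Σ_{(n,l)∈𝓛} B_{nl}(θ_n^0 − θ_n − θ_l^0 + θ_l)] over all (θ^0, θ) ∈ ℝ^𝓑 × ℝ^𝓑 satisfying B_{kl}(θ_k^0 − θ_l^0) ≤ C̄_{kl} and B_{kl}(θ_k − θ_l) ≤ C̄_{kl} for all (k,l)∈𝓛. Then the market administrator's expected profit is nonnegative: Γ^o := Σ_{n∈𝓑} λ_n(Σ_{j∈𝓙_n} L_j − Σ_{i∈𝓘_n} p_i − w_n^{sch}) − Σ_{n∈𝓑} ν_n(Σ_{i∈𝓘_n}(r_i^u − r_i^d) + Σ_{j∈𝓙_n} s_j + W_n^f − w_n^{sch} − w_n^{spi}) − Σ_{n∈𝓑}(Σ_{i∈𝓘_n}(t_i^u r_i^u + t_i^d r_i^d) − a_n(W_n^f − w_n^{spi})) + ζ·Σ_{j∈𝓙}(L_j − s_j) ≥ 0. -/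
open Finset

/-- Revenue adequacy of the market administrator (Section 4.1 of the paper). -/
theorem market_administrator_revenue_adequacy
    {Bus Gen Load : Type*} [Fintype Bus] [Fintype Gen] [Fintype Load] [DecidableEq Bus]
    (bI : Gen → Bus) (bJ : Load → Bus)
    (Lines : Finset (Bus × Bus))
    (Bsus : Bus → Bus → ℝ) (Cap : Bus × Bus → ℝ) (hCap : ∀ e ∈ Lines, 0 ≤ Cap e)
    (Ld : Load → ℝ) (Wf : Bus → ℝ)
    (lam nu a : Bus → ℝ) (tu td : Gen → ℝ)
    (p ru rd : Gen → ℝ) (wsch wspi : Bus → ℝ) (s : Load → ℝ)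
    (δ0 δ : Bus → ℝ)
    -- scheduling-stage power balance at every bus
    (hbal0 : ∀ n : Bus,
      (∑ i ∈ univ.filter (fun i => bI i = n), p i) + wsch n
        - (∑ e ∈ Lines.filter (fun e => e.1 = n), Bsus e.1 e.2 * (δ0 e.1 - δ0 e.2))
        = ∑ j ∈ univ.filter (fun j => bJ j = n), Ld j)
    -- real-time power balance at every bus
    (hbal1 : ∀ n : Bus,
      (∑ i ∈ univ.filter (fun i => bI i = n), (ru i - rd i))
        + (∑ j ∈ univ.filter (fun j => bJ j = n), s j)
        + (Wf n - wsch n - wspi n)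
        + (∑ e ∈ Lines.filter (fun e => e.1 = n),
            Bsus e.1 e.2 * (δ0 e.1 - δ e.1 - δ0 e.2 + δ e.2)) = 0)
    -- positive net scheduled consumption
    (hdem : 0 < ∑ j : Load, (Ld j - s j))
    -- the load surcharge ζ
    (ζ : ℝ)
    (hζ : ζ = (∑ n : Bus, ((∑ i ∈ univ.filter (fun i => bI i = n), (tu i * ru i + td i * rd i))
          - a n * (Wf n - wspi n)))
        / (∑ j : Load, (Ld j - s j)))
    -- (δ0, δ) is feasible for the line limits and minimizes the angle subproblem g
    (hfeas0 : ∀ e ∈ Lines, Bsus e.1 e.2 * (δ0 e.1 - δ0 e.2) ≤ Cap e)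
    (hfeas1 : ∀ e ∈ Lines, Bsus e.1 e.2 * (δ e.1 - δ e.2) ≤ Cap e)
    (hmin : ∀ θ0 θ : Bus → ℝ,
      (∀ e ∈ Lines, Bsus e.1 e.2 * (θ0 e.1 - θ0 e.2) ≤ Cap e) →
      (∀ e ∈ Lines, Bsus e.1 e.2 * (θ e.1 - θ e.2) ≤ Cap e) →
      (∑ n : Bus, (lam n * (∑ e ∈ Lines.filter (fun e => e.1 = n),
            Bsus e.1 e.2 * (δ0 e.1 - δ0 e.2))
          - nu n * (∑ e ∈ Lines.filter (fun e => e.1 = n),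
            Bsus e.1 e.2 * (δ0 e.1 - δ e.1 - δ0 e.2 + δ e.2))))
        ≤ ∑ n : Bus, (lam n * (∑ e ∈ Lines.filter (fun e => e.1 = n),
            Bsus e.1 e.2 * (θ0 e.1 - θ0 e.2))
          - nu n * (∑ e ∈ Lines.filter (fun e => e.1 = n),
            Bsus e.1 e.2 * (θ0 e.1 - θ e.1 - θ0 e.2 + θ e.2)))) :
    -- the market administrator's expected profit is nonnegative
    0 ≤ (∑ n : Bus, lam n * ((∑ j ∈ univ.filter (fun j => bJ j = n), Ld j)
          - (∑ i ∈ univ.filter (fun i => bI i = n), p i) - wsch n))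
      - (∑ n : Bus, nu n * ((∑ i ∈ univ.filter (fun i => bI i = n), (ru i - rd i))
          + (∑ j ∈ univ.filter (fun j => bJ j = n), s j) + Wf n - wsch n - wspi n))
      - (∑ n : Bus, ((∑ i ∈ univ.filter (fun i => bI i = n), (tu i * ru i + td i * rd i))
          - a n * (Wf n - wspi n)))
      + ζ * (∑ j : Load, (Ld j - s j)) := by

  have hD : (∑ j : Load, (Ld j - s j)) ≠ 0 := ne_of_gt hdem
  have hζD : ζ * (∑ j : Load, (Ld j - s j))
      = ∑ n : Bus, ((∑ i ∈ univ.filter (fun i => bI i = n), (tu i * ru i + td i * rd i))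
          - a n * (Wf n - wspi n)) := by
    rw [hζ, div_mul_cancel₀ _ hD]
  have key := hmin (fun _ => 0) (fun _ => 0)
    (fun e he => by simpa using hCap e he) (fun e he => by simpa using hCap e he)
  simp only [sub_zero, mul_zero, sub_self, zero_add, Finset.sum_const_zero] at key
  -- key : g(δ0,δ) ≤ 0
  have hS1 : (∑ n : Bus, lam n * ((∑ j ∈ univ.filter (fun j => bJ j = n), Ld j)
          - (∑ i ∈ univ.filter (fun i => bI i = n), p i) - wsch n))
      = -∑ n : Bus, lam n * (∑ e ∈ Lines.filter (fun e => e.1 = n),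
            Bsus e.1 e.2 * (δ0 e.1 - δ0 e.2)) := by
    rw [← Finset.sum_neg_distrib]
    refine Finset.sum_congr rfl fun n _ => ?_
    have h : (∑ j ∈ univ.filter (fun j => bJ j = n), Ld j)
        - (∑ i ∈ univ.filter (fun i => bI i = n), p i) - wsch n
        = -(∑ e ∈ Lines.filter (fun e => e.1 = n), Bsus e.1 e.2 * (δ0 e.1 - δ0 e.2)) := by
      linarith [hbal0 n]
    rw [h]; ring
  have hS2 : (∑ n : Bus, nu n * ((∑ i ∈ univ.filter (fun i => bI i = n), (ru i - rd i))
          + (∑ j ∈ univ.filter (fun j => bJ j = n), s j) + Wf n - wsch n - wspi n))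
      = -∑ n : Bus, nu n * (∑ e ∈ Lines.filter (fun e => e.1 = n),
            Bsus e.1 e.2 * (δ0 e.1 - δ e.1 - δ0 e.2 + δ e.2)) := by
    rw [← Finset.sum_neg_distrib]
    refine Finset.sum_congr rfl fun n _ => ?_
    have h : (∑ i ∈ univ.filter (fun i => bI i = n), (ru i - rd i))
        + (∑ j ∈ univ.filter (fun j => bJ j = n), s j) + Wf n - wsch n - wspi n
        = -(∑ e ∈ Lines.filter (fun e => e.1 = n),
            Bsus e.1 e.2 * (δ0 e.1 - δ e.1 - δ0 e.2 + δ e.2)) := by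
      linarith [hbal1 n]
    rw [h]; ring
  have hsplit : (∑ n : Bus, (lam n * (∑ e ∈ Lines.filter (fun e => e.1 = n),
            Bsus e.1 e.2 * (δ0 e.1 - δ0 e.2))
          - nu n * (∑ e ∈ Lines.filter (fun e => e.1 = n),
            Bsus e.1 e.2 * (δ0 e.1 - δ e.1 - δ0 e.2 + δ e.2))))
      = (∑ n : Bus, lam n * (∑ e ∈ Lines.filter (fun e => e.1 = n),
            Bsus e.1 e.2 * (δ0 e.1 - δ0 e.2)))
        - ∑ n : Bus, nu n * (∑ e ∈ Lines.filter (fun e => e.1 = n),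
            Bsus e.1 e.2 * (δ0 e.1 - δ e.1 - δ0 e.2 + δ e.2)) :=
    Finset.sum_sub_distrib _ _
  linarith [key, hS1, hS2, hsplit, hζD]
end

section
/- Cost recovery of VRES generators (Section 4.2). Let λ, ν, y, x, μ, C^w, w^{sch}, w^{spi}, W^f be real numbers with μ ≥ 0, w^{sch} ≥ 0 and W^f ≥ 0, satisfying the complementary slackness conditions w^{sch}·(−λ + ν + μ) = 0 and w^{spi}·(−C^w + ν − y + x) = 0, and the dual feasibility condition −C^w + ν − y + x ≥ 0. Then the VRES generator's expected profit satisfies Γ^w := (λ − ν)·w^{sch} + (C^w − ν + y − x)·w^{spi} + (ν − y + x − C^w)·W^f = μ·w^{sch} + (−C^w + ν − y + x)·W^f ≥ 0. -/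
/-- Cost recovery of VRES generators (Section 4.2 of the paper). -/
theorem vres_cost_recovery
    (lam nu y x mu Cw wsch wspi Wf : ℝ)
    (hmu : 0 ≤ mu) (hwsch : 0 ≤ wsch) (hWf : 0 ≤ Wf)
    (hcs1 : wsch * (-lam + nu + mu) = 0)
    (hcs2 : wspi * (-Cw + nu - y + x) = 0)
    (hdual : -Cw + nu - y + x ≥ 0) :
    (lam - nu) * wsch + (Cw - nu + y - x) * wspi + (nu - y + x - Cw) * Wf
      = mu * wsch + (-Cw + nu - y + x) * Wf
    ∧ (lam - nu) * wsch + (Cw - nu + y - x) * wspi + (nu - y + x - Cw) * Wf ≥ 0 := by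
  have heq : (lam - nu) * wsch + (Cw - nu + y - x) * wspi + (nu - y + x - Cw) * Wf
      = mu * wsch + (-Cw + nu - y + x) * Wf := by nlinarith [hcs1, hcs2]
  refine ⟨heq, ?_⟩
  rw [heq]
  have := mul_nonneg hmu hwsch
  nlinarith [mul_nonneg hdual hWf]
end

section
/- Cost recovery of conventional generators (Section 4.3). Let σ' > 0 and let C, C^u, C^d, λ, ν, κ be real numbers. Let p, r^u, r^d, α^u, α^d ≥ 0 satisfy r^u ≥ σ'·α^u and r^d ≥ σ'·α^d, let P̄, R̄^u, R̄^d ≥ 0, and let ρ, x, y, y^u, x^u, y^d, x^d ≥ 0. Assume the primal complementary slackness conditions: (p − P̄)·ρ = 0; (r^u + α^u·σ' − R̄^u)·x^u = 0; (r^d + α^d·σ' − R̄^d)·x^d = 0; (p + r^u − r^d − (α^u + α^d)·σ')·y = 0; (P̄ − p − r^u + r^d − (α^u + α^d)·σ')·x = 0; and the dual complementary slackness conditions: p·(C − λ + ρ − y + x) = 0; r^u·(C^u − ν − y^u + x^u − y + x) = 0; r^d·(−C^d + ν − y^d + x^d + y − x) = 0; α^u·(−κ + σ'·(y^u + x^u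 + y + x)) = 0; α^d·(−κ + σ'·(y^d + x^d + y + x)) = 0. Define τ^u := κ/σ' if κ − σ'·y^u ≥ 0 and τ^u := y^u otherwise; define τ^d := κ/σ' if κ − σ'·y^d ≥ 0 and τ^d := y^d otherwise. Then the generator's expected profit is nonnegative: Γ^g := (λ − C)·p + (ν − C^u)·r^u + (C^d − ν)·r^d + τ^u·r^u + τ^d·r^d ≥ 0. -/
/-- Cost recovery of conventional generators (Section 4.3 of the paper). -/
theorem conventional_generator_cost_recovery
    (σ' C Cu Cd lam nu kap : ℝ) (hσ' : 0 < σ')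
    (p ru rd au ad : ℝ)
    (hp : 0 ≤ p) (hru : 0 ≤ ru) (hrd : 0 ≤ rd) (hau : 0 ≤ au) (had : 0 ≤ ad)
    (hruL : ru ≥ σ' * au) (hrdL : rd ≥ σ' * ad)
    (Pbar Rubar Rdbar : ℝ) (hPbar : 0 ≤ Pbar) (hRubar : 0 ≤ Rubar) (hRdbar : 0 ≤ Rdbar)
    (ρ x y yu xu yd xd : ℝ)
    (hρ : 0 ≤ ρ) (hx : 0 ≤ x) (hy : 0 ≤ y) (hyu : 0 ≤ yu) (hxu : 0 ≤ xu)
    (hyd : 0 ≤ yd) (hxd : 0 ≤ xd)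
    (pc1 : (p - Pbar) * ρ = 0)
    (pc2 : (ru + au * σ' - Rubar) * xu = 0)
    (pc3 : (rd + ad * σ' - Rdbar) * xd = 0)
    (pc4 : (p + ru - rd - (au + ad) * σ') * y = 0)
    (pc5 : (Pbar - p - ru + rd - (au + ad) * σ') * x = 0)
    (dc1 : p * (C - lam + ρ - y + x) = 0)
    (dc2 : ru * (Cu - nu - yu + xu - y + x) = 0)
    (dc3 : rd * (-Cd + nu - yd + xd + y - x) = 0)
    (dc4 : au * (-kap + σ' * (yu + xu + y + x)) = 0)
    (dc5 : ad * (-kap + σ' * (yd + xd + y + x)) = 0) :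
    (lam - C) * p + (nu - Cu) * ru + (Cd - nu) * rd
      + (if 0 ≤ kap - σ' * yu then kap / σ' else yu) * ru
      + (if 0 ≤ kap - σ' * yd then kap / σ' else yd) * rd ≥ 0 := by
  obtain ⟨k, hk⟩ : ∃ k, kap = k * σ' := ⟨kap / σ', (div_mul_cancel₀ _ hσ'.ne').symm⟩
  subst hk
  rw [mul_div_cancel_right₀ _ hσ'.ne']
  have hpρ : 0 ≤ p * ρ := mul_nonneg hp hρ
  have hPx : 0 ≤ Pbar * x := mul_nonneg hPbar hx
  have h1 : 0 ≤ ru * xu := mul_nonneg hru hxu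
  have h2 : 0 ≤ rd * xd := mul_nonneg hrd hxd
  have h3 : 0 ≤ au * σ' * xu := mul_nonneg (mul_nonneg hau hσ'.le) hxu
  have h4 : 0 ≤ ad * σ' * xd := mul_nonneg (mul_nonneg had hσ'.le) hxd
  by_cases c1 : 0 ≤ k * σ' - σ' * yu <;> by_cases c2 : 0 ≤ k * σ' - σ' * yd <;>
    simp only [c1, c2, if_true, if_false, if_pos, if_neg, not_false_iff]
  · have hku : 0 ≤ (k - yu) * (ru - σ' * au) :=
      mul_nonneg (nonneg_of_mul_nonneg_right (by linarith) hσ')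
        (by linarith)
    have hkd : 0 ≤ (k - yd) * (rd - σ' * ad) :=
      mul_nonneg (nonneg_of_mul_nonneg_right (by linarith) hσ')
        (by linarith)
    linarith [hku, hkd, hpρ, hPx, h1, h2, h3, h4, pc1, pc4, pc5, dc1, dc2, dc3, dc4, dc5]
  · have hku : 0 ≤ (k - yu) * (ru - σ' * au) :=
      mul_nonneg (nonneg_of_mul_nonneg_right (by linarith) hσ')
        (by linarith)
    have hkd : 0 ≤ ad * (σ' * yd - k * σ') := mul_nonneg had (by linarith)
    linarith [hku, hkd, hpρ, hPx, h1, h2, h3, h4, pc1, pc4, pc5, dc1, dc2, dc3, dc4, dc5]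
  · have hku : 0 ≤ au * (σ' * yu - k * σ') := mul_nonneg hau (by linarith)
    have hkd : 0 ≤ (k - yd) * (rd - σ' * ad) :=
      mul_nonneg (nonneg_of_mul_nonneg_right (by linarith) hσ')
        (by linarith)
    linarith [hku, hkd, hpρ, hPx, h1, h2, h3, h4, pc1, pc4, pc5, dc1, dc2, dc3, dc4, dc5]
  · have hku : 0 ≤ au * (σ' * yu - k * σ') := mul_nonneg hau (by linarith)
    have hkd : 0 ≤ ad * (σ' * yd - k * σ') := mul_nonneg had (by linarith)
    linarith [hku, hkd, hpρ, hPx, h1, h2, h3, h4, pc1, pc4, pc5, dc1, dc2, dc3, dc4, dc5]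
end

section
/- Theorem 2 (revenue adequacy of the stochastic pricing scheme of Morales et al.). Let (p_i, w_n^{sch}, δ_n^0, r_i^{uω}, r_i^{dω}, s_j^ω, w_n^{spi,ω}, δ_n^ω) be an optimal solution of the SO linear program and let (λ_n, ν_n^ω) be the components of an optimal solution of its linear programming dual corresponding to the scheduling and per-scenario real-time balance constraints (equivalently, primal and dual satisfy primal feasibility, dual feasibility and complementary slackness). Then under the stochastic pricing scheme: (i) Γ̂^o := −Σ_{n∈𝓑} λ_n(Σ_{i∈𝓘_n} p_i + w_n^{sch} − Σ_{j∈𝓙_n} L_j) − Σ_{n∈𝓑} Σ_{ω∈Ω} ν_n^ω·A_n^ω ≥ 0, where A_n^ω := Σ_{i∈𝓘_n}(r_i^{uω} − r_i^{dω}) − (w_n^{spi,ω} + w_n^{sch} − W_n^ω) + Σ_{j∈𝓙_n} s_j^ω; (ii) for every n∈𝓑, Γ̂^{w_n} := λ_n·w_n^{sch} + Σ_{ω∈Ω} π^ω·B_n^ω ≥ 0, where B_n^ω := (ν_n^ω/π^ω)(W_n^ω − w_n^{sch} − w_n^{spi,ω}) − C_n^w(W_n^ω − w_n^{spi,ω});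 (iii) for every i∈𝓘, Γ̂^{g_i} := (λ_{b(i)} − C_i)·p_i + Σ_{ω∈Ω} π^ω·D_i^ω ≥ 0, where D_i^ω := (ν_{b(i)}^ω/π^ω − C_i^u)·r_i^{uω} − (ν_{b(i)}^ω/π^ω − C_i^d)·r_i^{dω}. -/
open Finset

lemma fib_fst {Bus : Type*} [Fintype Bus] [DecidableEq Bus]
    (Lines : Finset (Bus × Bus)) (h : Bus → ℝ) (g : Bus × Bus → ℝ) :
    ∑ n : Bus, h n * ∑ e ∈ Lines.filter (fun e => e.1 = n), g e
      = ∑ e ∈ Lines, h e.1 * g e := by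
  rw [← Finset.sum_fiberwise Lines (fun e => e.1) (fun e => h e.1 * g e)]
  refine Finset.sum_congr rfl fun n _ => ?_
  rw [Finset.mul_sum]
  exact Finset.sum_congr rfl fun e he => by rw [(Finset.mem_filter.mp he).2]

lemma fib_snd {Bus : Type*} [Fintype Bus] [DecidableEq Bus]
    (Lines : Finset (Bus × Bus)) (h : Bus → ℝ) (g : Bus × Bus → ℝ) :
    ∑ n : Bus, h n * ∑ e ∈ Lines.filter (fun e => e.2 = n), g e
      = ∑ e ∈ Lines, h e.2 * g e := by
  rw [← Finset.sum_fiberwise Lines (fun e => e.2) (fun e => h e.2 * g e)]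
  refine Finset.sum_congr rfl fun n _ => ?_
  rw [Finset.mul_sum]
  exact Finset.sum_congr rfl fun e he => by rw [(Finset.mem_filter.mp he).2]

lemma antisym_zero {Bus : Type*} [Fintype Bus] [DecidableEq Bus]
    (Lines : Finset (Bus × Bus)) (δ : Bus → ℝ) (g : Bus × Bus → ℝ)
    (h : ∀ n, (∑ e ∈ Lines.filter (fun e => e.1 = n), g e)
        = (∑ e ∈ Lines.filter (fun e => e.2 = n), g e)) :
    ∑ e ∈ Lines, (δ e.1 - δ e.2) * g e = 0 := by
  have h1 := fib_fst Lines δ g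
  have h2 := fib_snd Lines δ g
  have hsplit : ∑ e ∈ Lines, (δ e.1 - δ e.2) * g e
      = ∑ e ∈ Lines, δ e.1 * g e - ∑ e ∈ Lines, δ e.2 * g e := by
    rw [← Finset.sum_sub_distrib]
    exact Finset.sum_congr rfl fun e _ => by ring
  rw [hsplit, ← h1, ← h2, ← Finset.sum_sub_distrib]
  exact Finset.sum_eq_zero fun n _ => by rw [h n]; ring


/-- Theorem 2: revenue adequacy of the stochastic pricing scheme of Morales et al.
The hypotheses encode an optimal primal-dual pair of the SO (two-stage stochastic)
linear program via primal feasibility, dual feasibility, and complementary slackness. -/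
theorem so_pricing_revenue_adequacy
    {Bus Gen Load Scen : Type*}
    [Fintype Bus] [Fintype Gen] [Fintype Load] [Fintype Scen] [DecidableEq Bus]
    (bI : Gen → Bus) (bJ : Load → Bus)
    (Lines : Finset (Bus × Bus))
    (Bsus : Bus → Bus → ℝ) (Cap : Bus × Bus → ℝ) (hCap : ∀ e ∈ Lines, 0 ≤ Cap e)
    (C Cu Cd : Gen → ℝ) (Cw : Bus → ℝ) (V : Load → ℝ)
    (Ld : Load → ℝ) (hLd : ∀ j, 0 ≤ Ld j)
    (Pbar Rubar Rdbar : Gen → ℝ)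
    (hPbar : ∀ i, 0 ≤ Pbar i) (hRubar : ∀ i, 0 ≤ Rubar i) (hRdbar : ∀ i, 0 ≤ Rdbar i)
    (Wbar : Bus → ℝ) (hWbar : ∀ n, 0 ≤ Wbar n)
    (W : Bus → Scen → ℝ) (hW : ∀ n ω, 0 ≤ W n ω)
    (π : Scen → ℝ) (hπ : ∀ ω, 0 < π ω) (hπsum : ∑ ω : Scen, π ω = 1)
    -- primal variables (first stage and per scenario)
    (p : Gen → ℝ) (wsch : Bus → ℝ) (δ0 : Bus → ℝ)
    (ruw rdw : Gen → Scen → ℝ) (sw : Load → Scen → ℝ)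
    (wspiw : Bus → Scen → ℝ) (δw : Bus → Scen → ℝ)
    -- dual variables
    (lam : Bus → ℝ) (nu : Bus → Scen → ℝ)
    (mu : Bus → ℝ) (ρ : Gen → ℝ) (aD : Bus → Scen → ℝ)
    (xu xd yy xx : Gen → Scen → ℝ) (xs : Load → Scen → ℝ)
    (η0 : Bus × Bus → ℝ) (η : Bus × Bus → Scen → ℝ)
    -- primal feasibility: nonnegativity
    (hp : ∀ i, 0 ≤ p i) (hwsch : ∀ n, 0 ≤ wsch n)
    (hruw : ∀ i ω, 0 ≤ ruw i ω) (hrdw : ∀ i ω, 0 ≤ rdw i ω)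
    (hsw : ∀ j ω, 0 ≤ sw j ω) (hwspiw : ∀ n ω, 0 ≤ wspiw n ω)
    -- primal feasibility: scheduling-stage balance
    (hbal0 : ∀ n, (∑ i ∈ univ.filter (fun i => bI i = n), p i) + wsch n
        - (∑ e ∈ Lines.filter (fun e => e.1 = n), Bsus e.1 e.2 * (δ0 e.1 - δ0 e.2))
        = ∑ j ∈ univ.filter (fun j => bJ j = n), Ld j)
    -- primal feasibility: per-scenario real-time balance
    (hbal1 : ∀ n ω, (∑ i ∈ univ.filter (fun i => bI i = n), (ruw i ω - rdw i ω))
        + (∑ j ∈ univ.filter (fun j => bJ j = n), sw j ω)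
        + (W n ω - wsch n - wspiw n ω)
        + (∑ e ∈ Lines.filter (fun e => e.1 = n),
            Bsus e.1 e.2 * (δ0 e.1 - δw e.1 ω - δ0 e.2 + δw e.2 ω)) = 0)
    -- primal feasibility: line limits
    (hline0 : ∀ e ∈ Lines, Bsus e.1 e.2 * (δ0 e.1 - δ0 e.2) ≤ Cap e)
    (hline1 : ∀ ω, ∀ e ∈ Lines, Bsus e.1 e.2 * (δw e.1 ω - δw e.2 ω) ≤ Cap e)
    -- primal feasibility: bounds
    (hspiU : ∀ n ω, wspiw n ω ≤ W n ω)
    (hwschU : ∀ n, wsch n ≤ Wbar n)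
    (hpU : ∀ i, p i ≤ Pbar i)
    (hruU : ∀ i ω, ruw i ω ≤ Rubar i)
    (hrdU : ∀ i ω, rdw i ω ≤ Rdbar i)
    (hcapL : ∀ i ω, 0 ≤ p i + ruw i ω - rdw i ω)
    (hcapU : ∀ i ω, p i + ruw i ω - rdw i ω ≤ Pbar i)
    (hswU : ∀ j ω, sw j ω ≤ Ld j)
    -- dual feasibility: nonnegativity of inequality duals
    (hmu : ∀ n, 0 ≤ mu n) (hρ : ∀ i, 0 ≤ ρ i) (haD : ∀ n ω, 0 ≤ aD n ω)
    (hxu : ∀ i ω, 0 ≤ xu i ω) (hxd : ∀ i ω, 0 ≤ xd i ω)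
    (hyy : ∀ i ω, 0 ≤ yy i ω) (hxx : ∀ i ω, 0 ≤ xx i ω)
    (hxs : ∀ j ω, 0 ≤ xs j ω)
    (hη0 : ∀ e ∈ Lines, 0 ≤ η0 e) (hη : ∀ ω, ∀ e ∈ Lines, 0 ≤ η e ω)
    -- dual feasibility: one dual constraint per primal variable
    (dfp : ∀ i, 0 ≤ C i - lam (bI i) + ρ i + ∑ ω : Scen, (xx i ω - yy i ω))
    (dfwsch : ∀ n, 0 ≤ -lam n + (∑ ω : Scen, nu n ω) + mu n)
    (dfδ0 : ∀ n, (∑ e ∈ Lines.filter (fun e => e.1 = n),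
          Bsus e.1 e.2 * (lam n - (∑ ω : Scen, nu n ω) + η0 e))
        - (∑ e ∈ Lines.filter (fun e => e.2 = n),
          Bsus e.1 e.2 * (lam e.1 - (∑ ω : Scen, nu e.1 ω) + η0 e)) = 0)
    (dfru : ∀ i ω, 0 ≤ π ω * Cu i - nu (bI i) ω + xu i ω + xx i ω - yy i ω)
    (dfrd : ∀ i ω, 0 ≤ -(π ω * Cd i) + nu (bI i) ω + xd i ω - xx i ω + yy i ω)
    (dfs : ∀ j ω, 0 ≤ π ω * V j - nu (bJ j) ω + xs j ω)
    (dfwspi : ∀ n ω, 0 ≤ -(π ω * Cw n) + nu n ω + aD n ω)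
    (dfδw : ∀ n ω, (∑ e ∈ Lines.filter (fun e => e.1 = n),
          Bsus e.1 e.2 * (nu n ω + η e ω))
        - (∑ e ∈ Lines.filter (fun e => e.2 = n),
          Bsus e.1 e.2 * (nu e.1 ω + η e ω)) = 0)
    -- complementary slackness: dual variable times primal slack
    (csρ : ∀ i, ρ i * (Pbar i - p i) = 0)
    (csmu : ∀ n, mu n * (Wbar n - wsch n) = 0)
    (csaD : ∀ n ω, aD n ω * (W n ω - wspiw n ω) = 0)
    (csxu : ∀ i ω, xu i ω * (Rubar i - ruw i ω) = 0)
    (csxd : ∀ i ω, xd i ω * (Rdbar i - rdw i ω) = 0)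
    (csyy : ∀ i ω, yy i ω * (p i + ruw i ω - rdw i ω) = 0)
    (csxx : ∀ i ω, xx i ω * (Pbar i - p i - ruw i ω + rdw i ω) = 0)
    (csxs : ∀ j ω, xs j ω * (Ld j - sw j ω) = 0)
    (csη0 : ∀ e ∈ Lines, η0 e * (Cap e - Bsus e.1 e.2 * (δ0 e.1 - δ0 e.2)) = 0)
    (csη : ∀ ω, ∀ e ∈ Lines, η e ω * (Cap e - Bsus e.1 e.2 * (δw e.1 ω - δw e.2 ω)) = 0)
    -- complementary slackness: primal variable times dual slack
    (dsp : ∀ i, p i * (C i - lam (bI i) + ρ i + ∑ ω : Scen, (xx i ω - yy i ω)) = 0)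
    (dswsch : ∀ n, wsch n * (-lam n + (∑ ω : Scen, nu n ω) + mu n) = 0)
    (dsru : ∀ i ω, ruw i ω * (π ω * Cu i - nu (bI i) ω + xu i ω + xx i ω - yy i ω) = 0)
    (dsrd : ∀ i ω, rdw i ω * (-(π ω * Cd i) + nu (bI i) ω + xd i ω - xx i ω + yy i ω) = 0)
    (dss : ∀ j ω, sw j ω * (π ω * V j - nu (bJ j) ω + xs j ω) = 0)
    (dswspi : ∀ n ω, wspiw n ω * (-(π ω * Cw n) + nu n ω + aD n ω) = 0) :
    -- (i) revenue adequacy in expectation of the market administrator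
    (0 ≤ -(∑ n : Bus, lam n * ((∑ i ∈ univ.filter (fun i => bI i = n), p i) + wsch n
            - ∑ j ∈ univ.filter (fun j => bJ j = n), Ld j))
        - ∑ n : Bus, ∑ ω : Scen, nu n ω *
            ((∑ i ∈ univ.filter (fun i => bI i = n), (ruw i ω - rdw i ω))
              - (wspiw n ω + wsch n - W n ω)
              + ∑ j ∈ univ.filter (fun j => bJ j = n), sw j ω))
    -- (ii) cost recovery in expectation of every VRES generator
    ∧ (∀ n : Bus, 0 ≤ lam n * wsch n
        + ∑ ω : Scen, π ω * ((nu n ω / π ω) * (W n ω - wsch n - wspiw n ω)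
            - Cw n * (W n ω - wspiw n ω)))
    -- (iii) cost recovery in expectation of every conventional generator
    ∧ (∀ i : Gen, 0 ≤ (lam (bI i) - C i) * p i
        + ∑ ω : Scen, π ω * ((nu (bI i) ω / π ω - Cu i) * ruw i ω
            - (nu (bI i) ω / π ω - Cd i) * rdw i ω)) := by
  refine ⟨?_, ?_, ?_⟩
  · -- (i) revenue adequacy of the market administrator
    -- Step 1: scheduling balance rewrites the first sum as a flow sum
    have step1 : ∑ n : Bus, lam n * ((∑ i ∈ univ.filter (fun i => bI i = n), p i) + wsch n
            - ∑ j ∈ univ.filter (fun j => bJ j = n), Ld j)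
        = ∑ e ∈ Lines, lam e.1 * (Bsus e.1 e.2 * (δ0 e.1 - δ0 e.2)) := by
      rw [← fib_fst Lines lam (fun e => Bsus e.1 e.2 * (δ0 e.1 - δ0 e.2))]
      exact Finset.sum_congr rfl fun n _ => by
        have := hbal0 n
        have hE : (∑ i ∈ univ.filter (fun i => bI i = n), p i) + wsch n
            - ∑ j ∈ univ.filter (fun j => bJ j = n), Ld j
            = ∑ e ∈ Lines.filter (fun e => e.1 = n), Bsus e.1 e.2 * (δ0 e.1 - δ0 e.2) := by
          linarith
        rw [hE]
    -- Step 2: real-time balance rewrites the second sum as flow sums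
    have step2 : ∑ n : Bus, ∑ ω : Scen, nu n ω *
            ((∑ i ∈ univ.filter (fun i => bI i = n), (ruw i ω - rdw i ω))
              - (wspiw n ω + wsch n - W n ω)
              + ∑ j ∈ univ.filter (fun j => bJ j = n), sw j ω)
        = -∑ ω : Scen, ∑ e ∈ Lines, nu e.1 ω *
            (Bsus e.1 e.2 * (δ0 e.1 - δw e.1 ω - δ0 e.2 + δw e.2 ω)) := by
      rw [Finset.sum_comm, ← Finset.sum_neg_distrib]
      refine Finset.sum_congr rfl fun ω _ => ?_
      rw [← fib_fst Lines (fun n => nu n ω)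
        (fun e => Bsus e.1 e.2 * (δ0 e.1 - δw e.1 ω - δ0 e.2 + δw e.2 ω)),
        ← Finset.sum_neg_distrib]
      refine Finset.sum_congr rfl fun n _ => ?_
      have := hbal1 n ω
      have hE : (∑ i ∈ univ.filter (fun i => bI i = n), (ruw i ω - rdw i ω))
              - (wspiw n ω + wsch n - W n ω)
              + ∑ j ∈ univ.filter (fun j => bJ j = n), sw j ω
          = -∑ e ∈ Lines.filter (fun e => e.1 = n),
              Bsus e.1 e.2 * (δ0 e.1 - δw e.1 ω - δ0 e.2 + δw e.2 ω) := by
        linarith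
      rw [hE]; ring
    -- Step 3: split the mixed flow sum
    have split : ∑ ω : Scen, ∑ e ∈ Lines, nu e.1 ω *
            (Bsus e.1 e.2 * (δ0 e.1 - δw e.1 ω - δ0 e.2 + δw e.2 ω))
        = (∑ e ∈ Lines, (∑ ω : Scen, nu e.1 ω) * (Bsus e.1 e.2 * (δ0 e.1 - δ0 e.2)))
          - ∑ ω : Scen, ∑ e ∈ Lines, nu e.1 ω * (Bsus e.1 e.2 * (δw e.1 ω - δw e.2 ω)) := by
      have l1 : ∀ ω : Scen, ∑ e ∈ Lines, nu e.1 ω *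
            (Bsus e.1 e.2 * (δ0 e.1 - δw e.1 ω - δ0 e.2 + δw e.2 ω))
          = ∑ e ∈ Lines, (nu e.1 ω * (Bsus e.1 e.2 * (δ0 e.1 - δ0 e.2))
              - nu e.1 ω * (Bsus e.1 e.2 * (δw e.1 ω - δw e.2 ω))) :=
        fun ω => Finset.sum_congr rfl fun e _ => by ring
      calc ∑ ω : Scen, ∑ e ∈ Lines, nu e.1 ω *
            (Bsus e.1 e.2 * (δ0 e.1 - δw e.1 ω - δ0 e.2 + δw e.2 ω))
          = ∑ ω : Scen, ∑ e ∈ Lines, (nu e.1 ω * (Bsus e.1 e.2 * (δ0 e.1 - δ0 e.2))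
              - nu e.1 ω * (Bsus e.1 e.2 * (δw e.1 ω - δw e.2 ω))) :=
            Finset.sum_congr rfl fun ω _ => l1 ω
        _ = ∑ ω : Scen, ((∑ e ∈ Lines, nu e.1 ω * (Bsus e.1 e.2 * (δ0 e.1 - δ0 e.2)))
              - ∑ e ∈ Lines, nu e.1 ω * (Bsus e.1 e.2 * (δw e.1 ω - δw e.2 ω))) :=
            Finset.sum_congr rfl fun ω _ => Finset.sum_sub_distrib _ _
        _ = (∑ ω : Scen, ∑ e ∈ Lines, nu e.1 ω * (Bsus e.1 e.2 * (δ0 e.1 - δ0 e.2)))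
              - ∑ ω : Scen, ∑ e ∈ Lines, nu e.1 ω * (Bsus e.1 e.2 * (δw e.1 ω - δw e.2 ω)) :=
            Finset.sum_sub_distrib _ _
        _ = (∑ e ∈ Lines, ∑ ω : Scen, nu e.1 ω * (Bsus e.1 e.2 * (δ0 e.1 - δ0 e.2)))
              - ∑ ω : Scen, ∑ e ∈ Lines, nu e.1 ω * (Bsus e.1 e.2 * (δw e.1 ω - δw e.2 ω)) := by
            rw [Finset.sum_comm]
        _ = (∑ e ∈ Lines, (∑ ω : Scen, nu e.1 ω) * (Bsus e.1 e.2 * (δ0 e.1 - δ0 e.2)))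
              - ∑ ω : Scen, ∑ e ∈ Lines, nu e.1 ω * (Bsus e.1 e.2 * (δw e.1 ω - δw e.2 ω)) := by
            congr 1
            exact Finset.sum_congr rfl fun e _ => (Finset.sum_mul _ _ _).symm
    -- Key dual identities from the δ dual-feasibility equalities
    have key0 : ∑ e ∈ Lines, (δ0 e.1 - δ0 e.2) *
        (Bsus e.1 e.2 * (lam e.1 - (∑ ω : Scen, nu e.1 ω) + η0 e)) = 0 := by
      refine antisym_zero Lines δ0 _ fun n => ?_
      have h := dfδ0 n
      have hc : ∑ e ∈ Lines.filter (fun e => e.1 = n),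
            Bsus e.1 e.2 * (lam n - (∑ ω : Scen, nu n ω) + η0 e)
          = ∑ e ∈ Lines.filter (fun e => e.1 = n),
            Bsus e.1 e.2 * (lam e.1 - (∑ ω : Scen, nu e.1 ω) + η0 e) :=
        Finset.sum_congr rfl fun e he => by rw [(Finset.mem_filter.mp he).2]
      linarith
    have keyw : ∀ ω : Scen, ∑ e ∈ Lines, (δw e.1 ω - δw e.2 ω) *
        (Bsus e.1 e.2 * (nu e.1 ω + η e ω)) = 0 := by
      intro ω
      refine antisym_zero Lines (fun n => δw n ω) _ fun n => ?_
      have h := dfδw n ω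
      have hc : ∑ e ∈ Lines.filter (fun e => e.1 = n),
            Bsus e.1 e.2 * (nu n ω + η e ω)
          = ∑ e ∈ Lines.filter (fun e => e.1 = n),
            Bsus e.1 e.2 * (nu e.1 ω + η e ω) :=
        Finset.sum_congr rfl fun e he => by rw [(Finset.mem_filter.mp he).2]
      linarith
    -- Convert the key identities to usable linear relations between sums
    have E1 : ∑ e ∈ Lines, (∑ ω : Scen, nu e.1 ω) * (Bsus e.1 e.2 * (δ0 e.1 - δ0 e.2))
        = (∑ e ∈ Lines, lam e.1 * (Bsus e.1 e.2 * (δ0 e.1 - δ0 e.2)))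
          + ∑ e ∈ Lines, η0 e * (Bsus e.1 e.2 * (δ0 e.1 - δ0 e.2)) := by
      have h2 : ∑ e ∈ Lines, (δ0 e.1 - δ0 e.2) *
            (Bsus e.1 e.2 * (lam e.1 - (∑ ω : Scen, nu e.1 ω) + η0 e))
          = (∑ e ∈ Lines, lam e.1 * (Bsus e.1 e.2 * (δ0 e.1 - δ0 e.2)))
            - (∑ e ∈ Lines, (∑ ω : Scen, nu e.1 ω) * (Bsus e.1 e.2 * (δ0 e.1 - δ0 e.2)))
            + ∑ e ∈ Lines, η0 e * (Bsus e.1 e.2 * (δ0 e.1 - δ0 e.2)) := by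
        rw [← Finset.sum_sub_distrib, ← Finset.sum_add_distrib]
        exact Finset.sum_congr rfl fun e _ => by ring
      linarith [key0, h2]
    have E3 : ∑ ω : Scen, ∑ e ∈ Lines, nu e.1 ω * (Bsus e.1 e.2 * (δw e.1 ω - δw e.2 ω))
        = -∑ ω : Scen, ∑ e ∈ Lines, η e ω * (Bsus e.1 e.2 * (δw e.1 ω - δw e.2 ω)) := by
      rw [← Finset.sum_neg_distrib]
      refine Finset.sum_congr rfl fun ω _ => ?_
      have h2 : ∑ e ∈ Lines, (δw e.1 ω - δw e.2 ω) * (Bsus e.1 e.2 * (nu e.1 ω + η e ω))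
          = (∑ e ∈ Lines, nu e.1 ω * (Bsus e.1 e.2 * (δw e.1 ω - δw e.2 ω)))
            + ∑ e ∈ Lines, η e ω * (Bsus e.1 e.2 * (δw e.1 ω - δw e.2 ω)) := by
        rw [← Finset.sum_add_distrib]
        exact Finset.sum_congr rfl fun e _ => by ring
      have hneg : ∑ e ∈ Lines, -(η e ω * (Bsus e.1 e.2 * (δw e.1 ω - δw e.2 ω)))
          = -∑ e ∈ Lines, η e ω * (Bsus e.1 e.2 * (δw e.1 ω - δw e.2 ω)) :=
        Finset.sum_neg_distrib _
      linarith [keyw ω, h2, hneg]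
    -- Nonnegativity of the congestion-rent terms
    have pos0 : 0 ≤ ∑ e ∈ Lines, η0 e * (Bsus e.1 e.2 * (δ0 e.1 - δ0 e.2)) :=
      Finset.sum_nonneg fun e he => by
        nlinarith [csη0 e he, mul_nonneg (hη0 e he) (hCap e he)]
    have posw : 0 ≤ ∑ ω : Scen, ∑ e ∈ Lines, η e ω * (Bsus e.1 e.2 * (δw e.1 ω - δw e.2 ω)) :=
      Finset.sum_nonneg fun ω _ => Finset.sum_nonneg fun e he => by
        nlinarith [csη ω e he, mul_nonneg (hη ω e he) (hCap e he)]
    linarith [step1, step2, split, E1, E3, pos0, posw]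
  · -- (ii) cost recovery of the VRES generators
    intro n
    have hsum : ∑ ω : Scen, π ω * ((nu n ω / π ω) * (W n ω - wsch n - wspiw n ω)
            - Cw n * (W n ω - wspiw n ω))
        = ∑ ω : Scen, (nu n ω * (W n ω - wsch n - wspiw n ω)
            - π ω * Cw n * (W n ω - wspiw n ω)) := by
      refine Finset.sum_congr rfl fun ω _ => ?_
      have hne : π ω ≠ 0 := (hπ ω).ne'
      field_simp
    have h1 : lam n * wsch n = wsch n * mu n + ∑ ω : Scen, wsch n * nu n ω := by
      have hms : wsch n * (∑ ω : Scen, nu n ω) = ∑ ω : Scen, wsch n * nu n ω :=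
        Finset.mul_sum _ _ _
      linear_combination hms - dswsch n
    have hpos : 0 ≤ ∑ ω : Scen, (wsch n * nu n ω + (nu n ω * (W n ω - wsch n - wspiw n ω)
            - π ω * Cw n * (W n ω - wspiw n ω))) :=
      Finset.sum_nonneg fun ω _ => by
        nlinarith [dswspi n ω, csaD n ω, mul_nonneg (hW n ω) (dfwspi n ω)]
    have hsplit : ∑ ω : Scen, (wsch n * nu n ω + (nu n ω * (W n ω - wsch n - wspiw n ω)
            - π ω * Cw n * (W n ω - wspiw n ω)))
        = (∑ ω : Scen, wsch n * nu n ω) + ∑ ω : Scen, (nu n ω * (W n ω - wsch n - wspiw n ω)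
            - π ω * Cw n * (W n ω - wspiw n ω)) := Finset.sum_add_distrib
    linarith [hsum, h1, hpos, hsplit, mul_nonneg (hwsch n) (hmu n)]
  · -- (iii) cost recovery of the conventional generators
    intro i
    have hsum : ∑ ω : Scen, π ω * ((nu (bI i) ω / π ω - Cu i) * ruw i ω
            - (nu (bI i) ω / π ω - Cd i) * rdw i ω)
        = ∑ ω : Scen, ((nu (bI i) ω - π ω * Cu i) * ruw i ω
            - (nu (bI i) ω - π ω * Cd i) * rdw i ω) := by
      refine Finset.sum_congr rfl fun ω _ => ?_
      have hne : π ω ≠ 0 := (hπ ω).ne'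
      field_simp
    have h1 : (lam (bI i) - C i) * p i
        = p i * ρ i + ∑ ω : Scen, p i * (xx i ω - yy i ω) := by
      have hms : p i * (∑ ω : Scen, (xx i ω - yy i ω))
          = ∑ ω : Scen, p i * (xx i ω - yy i ω) := Finset.mul_sum _ _ _
      linear_combination hms - dsp i
    have hpos : 0 ≤ ∑ ω : Scen, (p i * (xx i ω - yy i ω)
          + ((nu (bI i) ω - π ω * Cu i) * ruw i ω
            - (nu (bI i) ω - π ω * Cd i) * rdw i ω)) :=
      Finset.sum_nonneg fun ω _ => by
        nlinarith [dsru i ω, dsrd i ω, csyy i ω, csxx i ω,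
          mul_nonneg (hruw i ω) (hxu i ω), mul_nonneg (hrdw i ω) (hxd i ω),
          mul_nonneg (hxx i ω) (hPbar i)]
    have hsplit : ∑ ω : Scen, (p i * (xx i ω - yy i ω)
          + ((nu (bI i) ω - π ω * Cu i) * ruw i ω
            - (nu (bI i) ω - π ω * Cd i) * rdw i ω))
        = (∑ ω : Scen, p i * (xx i ω - yy i ω))
          + ∑ ω : Scen, ((nu (bI i) ω - π ω * Cu i) * ruw i ω
            - (nu (bI i) ω - π ω * Cd i) * rdw i ω) := Finset.sum_add_distrib
    linarith [hsum, h1, hpos, hsplit, mul_nonneg (hp i) (hρ i)]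
end

section
/- Nonnegativity of the merchandising surplus via the Lagrangian angle subproblem (the claim z^o = −Γ₁^o ≤ 0 of Section 4.1). Let the primal variables (p_i, r_i^u, r_i^d, α_i^u, α_i^d, w_n^{sch}, w_n^{spi}, β_n, δ_n^0, δ_n, s_j, γ_j) be an optimal solution of the DCCO linear program and let (λ_n, ν_n, …) be an optimal solution of its linear programming dual (equivalently, the pair satisfies primal feasibility, dual feasibility and complementary slackness). Then: (a) the voltage-angle components (δ^0, δ) minimize the linear function g(θ^0, θ) := Σ_{n∈𝓑}[λ_n Σ_{(n,l)∈𝓛} B_{nl}(θ_n^0 − θ_l^0) − ν_n Σ_{(n,l)∈𝓛} B_{nl}(θ_n^0 − θ_n − θ_l^0 + θ_l)] over all pairs (θ^0, θ) ∈ ℝ^𝓑 × ℝ^𝓑 satisfying the line limits B_{kl}(θ_k^0 − θ_l^0) ≤ C̄_{kl} and B_{kl}(θ_k − θ_l) ≤ C̄_{kl} for all (k,l)∈𝓛; and (b) consequently g(δ^0, δ) ≤ 0 and Γ₁^o := Σ_{n∈𝓑} λ_n(Σ_{j∈𝓙_n} L_j − Σ_{i∈𝓘_n} p_i − w_n^{sch})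 − Σ_{n∈𝓑} ν_n(Σ_{i∈𝓘_n}(r_i^u − r_i^d) + Σ_{j∈𝓙_n} s_j + W_n^f − w_n^{sch} − w_n^{spi}) = −g(δ^0, δ) ≥ 0. -/
open Finset

lemma fiber_sum_fst {Bus : Type*} [Fintype Bus] [DecidableEq Bus]
    (Lines : Finset (Bus × Bus)) (f : Bus → ℝ) (h : Bus × Bus → ℝ) :
    (∑ n : Bus, f n * ∑ e ∈ Lines.filter (fun e => e.1 = n), h e)
      = ∑ e ∈ Lines, f e.1 * h e := by
  rw [← Finset.sum_fiberwise Lines (fun e => e.1) (fun e => f e.1 * h e)]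
  refine Finset.sum_congr rfl fun n _ => ?_
  rw [Finset.mul_sum]
  exact Finset.sum_congr rfl fun e he => by rw [(Finset.mem_filter.1 he).2]

lemma fiber_sum_snd {Bus : Type*} [Fintype Bus] [DecidableEq Bus]
    (Lines : Finset (Bus × Bus)) (f : Bus → ℝ) (h : Bus × Bus → ℝ) :
    (∑ n : Bus, f n * ∑ e ∈ Lines.filter (fun e => e.2 = n), h e)
      = ∑ e ∈ Lines, f e.2 * h e := by
  rw [← Finset.sum_fiberwise Lines (fun e => e.2) (fun e => f e.2 * h e)]
  refine Finset.sum_congr rfl fun n _ => ?_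
  rw [Finset.mul_sum]
  exact Finset.sum_congr rfl fun e he => by rw [(Finset.mem_filter.1 he).2]

/-- Nonnegativity of the merchandising surplus via the Lagrangian angle
subproblem (the claim `z^o = -Γ₁^o ≤ 0` of Section 4.1).  The hypotheses encode
an optimal primal-dual pair of the DCCO linear program via primal feasibility,
dual feasibility, and complementary slackness. -/
theorem merchandising_surplus_nonneg
    {Bus Gen Load : Type*} [Fintype Bus] [Fintype Gen] [Fintype Load] [DecidableEq Bus]
    (bI : Gen → Bus) (bJ : Load → Bus)
    (Lines : Finset (Bus × Bus))
    (Bsus : Bus → Bus → ℝ) (Cap : Bus × Bus → ℝ) (hCap : ∀ e ∈ Lines, 0 ≤ Cap e)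
    (C Cu Cd : Gen → ℝ) (Cw : Bus → ℝ) (V : Load → ℝ)
    (Ld : Load → ℝ) (hLd : ∀ j, 0 ≤ Ld j)
    (Pbar Rubar Rdbar : Gen → ℝ)
    (hPbar : ∀ i, 0 ≤ Pbar i) (hRubar : ∀ i, 0 ≤ Rubar i) (hRdbar : ∀ i, 0 ≤ Rdbar i)
    (Wf Wbar : Bus → ℝ) (hWf : ∀ n, 0 ≤ Wf n) (hWbar : ∀ n, 0 ≤ Wbar n)
    (σ : Bus → ℝ) (hσ : ∀ n, 0 < σ n) (q : ℝ) (hq : 0 < q)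
    -- primal variables
    (p ru rd au ad : Gen → ℝ) (wsch wspi β δ0 δ : Bus → ℝ) (s γ : Load → ℝ)
    -- dual variables
    (lam nu kap mu yspi xspi : Bus → ℝ)
    (ρ yu xu yd xd yy xx : Gen → ℝ) (ys xs : Load → ℝ)
    (η0 η : Bus × Bus → ℝ)
    -- primal feasibility: nonnegativity
    (hp : ∀ i, 0 ≤ p i) (hru : ∀ i, 0 ≤ ru i) (hrd : ∀ i, 0 ≤ rd i)
    (hau : ∀ i, 0 ≤ au i) (had : ∀ i, 0 ≤ ad i)
    (hwsch : ∀ n, 0 ≤ wsch n) (hwspi : ∀ n, 0 ≤ wspi n) (hβ : ∀ n, 0 ≤ β n)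
    (hs : ∀ j, 0 ≤ s j) (hγ : ∀ j, 0 ≤ γ j)
    -- primal feasibility: scheduling-stage balance
    (hbal0 : ∀ n, (∑ i ∈ univ.filter (fun i => bI i = n), p i) + wsch n
        - (∑ e ∈ Lines.filter (fun e => e.1 = n), Bsus e.1 e.2 * (δ0 e.1 - δ0 e.2))
        = ∑ j ∈ univ.filter (fun j => bJ j = n), Ld j)
    -- primal feasibility: real-time balance
    (hbal1 : ∀ n, (∑ i ∈ univ.filter (fun i => bI i = n), (ru i - rd i))
        + (∑ j ∈ univ.filter (fun j => bJ j = n), s j)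
        + (Wf n - wsch n - wspi n)
        + (∑ e ∈ Lines.filter (fun e => e.1 = n),
            Bsus e.1 e.2 * (δ0 e.1 - δ e.1 - δ0 e.2 + δ e.2)) = 0)
    -- primal feasibility: participation
    (hpart : ∀ n, (∑ i ∈ univ.filter (fun i => bI i = n), (au i + ad i))
        + (∑ j ∈ univ.filter (fun j => bJ j = n), γ j) + β n = 1)
    -- primal feasibility: line limits
    (hline0 : ∀ e ∈ Lines, Bsus e.1 e.2 * (δ0 e.1 - δ0 e.2) ≤ Cap e)
    (hline1 : ∀ e ∈ Lines, Bsus e.1 e.2 * (δ e.1 - δ e.2) ≤ Cap e)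
    -- primal feasibility: bounds
    (hwschU : ∀ n, wsch n ≤ Wbar n)
    (hpU : ∀ i, p i ≤ Pbar i)
    (hspiL : ∀ n, wspi n - β n * (q * σ n) ≥ 0)
    (hspiU : ∀ n, Wf n - wspi n - (1 - β n) * (q * σ n) ≥ 0)
    (hruL : ∀ i, ru i - au i * (q * σ (bI i)) ≥ 0)
    (hruU : ∀ i, Rubar i - ru i - au i * (q * σ (bI i)) ≥ 0)
    (hrdL : ∀ i, rd i - ad i * (q * σ (bI i)) ≥ 0)
    (hrdU : ∀ i, Rdbar i - rd i - ad i * (q * σ (bI i)) ≥ 0)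
    (hcapL : ∀ i, p i + ru i - rd i - (au i + ad i) * (q * σ (bI i)) ≥ 0)
    (hcapU : ∀ i, Pbar i - p i - ru i + rd i - (au i + ad i) * (q * σ (bI i)) ≥ 0)
    (hsL : ∀ j, s j - γ j * (q * σ (bJ j)) ≥ 0)
    (hsU : ∀ j, Ld j - s j - γ j * (q * σ (bJ j)) ≥ 0)
    -- dual feasibility: nonnegativity of inequality duals
    (hmu : ∀ n, 0 ≤ mu n) (hρ : ∀ i, 0 ≤ ρ i)
    (hyspi : ∀ n, 0 ≤ yspi n) (hxspi : ∀ n, 0 ≤ xspi n)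
    (hyu : ∀ i, 0 ≤ yu i) (hxu : ∀ i, 0 ≤ xu i)
    (hyd : ∀ i, 0 ≤ yd i) (hxd : ∀ i, 0 ≤ xd i)
    (hyy : ∀ i, 0 ≤ yy i) (hxx : ∀ i, 0 ≤ xx i)
    (hys : ∀ j, 0 ≤ ys j) (hxs : ∀ j, 0 ≤ xs j)
    (hη0 : ∀ e ∈ Lines, 0 ≤ η0 e) (hη : ∀ e ∈ Lines, 0 ≤ η e)
    -- dual feasibility: one dual constraint per primal variable
    (dfp : ∀ i, 0 ≤ C i - lam (bI i) + ρ i - yy i + xx i)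
    (dfru : ∀ i, 0 ≤ Cu i - nu (bI i) - yu i + xu i - yy i + xx i)
    (dfrd : ∀ i, 0 ≤ -Cd i + nu (bI i) - yd i + xd i + yy i - xx i)
    (dfau : ∀ i, 0 ≤ -kap (bI i) + (q * σ (bI i)) * (yu i + xu i + yy i + xx i))
    (dfad : ∀ i, 0 ≤ -kap (bI i) + (q * σ (bI i)) * (yd i + xd i + yy i + xx i))
    (dfwsch : ∀ n, 0 ≤ -lam n + nu n + mu n)
    (dfwspi : ∀ n, 0 ≤ -Cw n + nu n - yspi n + xspi n)
    (dfβ : ∀ n, 0 ≤ -kap n + (q * σ n) * (yspi n - xspi n))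
    (dfs : ∀ j, 0 ≤ V j - nu (bJ j) - ys j + xs j)
    (dfγ : ∀ j, 0 ≤ -kap (bJ j) + (q * σ (bJ j)) * (ys j + xs j))
    (dfδ0 : ∀ n, (∑ e ∈ Lines.filter (fun e => e.1 = n),
          Bsus e.1 e.2 * (lam n - nu n + η0 e))
        - (∑ e ∈ Lines.filter (fun e => e.2 = n),
          Bsus e.1 e.2 * (lam e.1 - nu e.1 + η0 e)) = 0)
    (dfδ : ∀ n, (∑ e ∈ Lines.filter (fun e => e.1 = n), Bsus e.1 e.2 * (nu n + η e))
        - (∑ e ∈ Lines.filter (fun e => e.2 = n), Bsus e.1 e.2 * (nu e.1 + η e)) = 0)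
    -- complementary slackness: dual variable times primal slack
    (csρ : ∀ i, ρ i * (Pbar i - p i) = 0)
    (csmu : ∀ n, mu n * (Wbar n - wsch n) = 0)
    (csyspi : ∀ n, yspi n * (wspi n - β n * (q * σ n)) = 0)
    (csxspi : ∀ n, xspi n * (Wf n - wspi n - (1 - β n) * (q * σ n)) = 0)
    (csyu : ∀ i, yu i * (ru i - au i * (q * σ (bI i))) = 0)
    (csxu : ∀ i, xu i * (Rubar i - ru i - au i * (q * σ (bI i))) = 0)
    (csyd : ∀ i, yd i * (rd i - ad i * (q * σ (bI i))) = 0)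
    (csxd : ∀ i, xd i * (Rdbar i - rd i - ad i * (q * σ (bI i))) = 0)
    (csyy : ∀ i, yy i * (p i + ru i - rd i - (au i + ad i) * (q * σ (bI i))) = 0)
    (csxx : ∀ i, xx i * (Pbar i - p i - ru i + rd i - (au i + ad i) * (q * σ (bI i))) = 0)
    (csys : ∀ j, ys j * (s j - γ j * (q * σ (bJ j))) = 0)
    (csxs : ∀ j, xs j * (Ld j - s j - γ j * (q * σ (bJ j))) = 0)
    (csη0 : ∀ e ∈ Lines, η0 e * (Cap e - Bsus e.1 e.2 * (δ0 e.1 - δ0 e.2)) = 0)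
    (csη : ∀ e ∈ Lines, η e * (Cap e - Bsus e.1 e.2 * (δ e.1 - δ e.2)) = 0)
    -- complementary slackness: primal variable times dual slack
    (dsp : ∀ i, p i * (C i - lam (bI i) + ρ i - yy i + xx i) = 0)
    (dsru : ∀ i, ru i * (Cu i - nu (bI i) - yu i + xu i - yy i + xx i) = 0)
    (dsrd : ∀ i, rd i * (-Cd i + nu (bI i) - yd i + xd i + yy i - xx i) = 0)
    (dsau : ∀ i, au i * (-kap (bI i) + (q * σ (bI i)) * (yu i + xu i + yy i + xx i)) = 0)
    (dsad : ∀ i, ad i * (-kap (bI i) + (q * σ (bI i)) * (yd i + xd i + yy i + xx i)) = 0)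
    (dswsch : ∀ n, wsch n * (-lam n + nu n + mu n) = 0)
    (dswspi : ∀ n, wspi n * (-Cw n + nu n - yspi n + xspi n) = 0)
    (dsβ : ∀ n, β n * (-kap n + (q * σ n) * (yspi n - xspi n)) = 0)
    (dss : ∀ j, s j * (V j - nu (bJ j) - ys j + xs j) = 0)
    (dsγ : ∀ j, γ j * (-kap (bJ j) + (q * σ (bJ j)) * (ys j + xs j)) = 0) :
    -- with g the objective of the Lagrangian angle subproblem:
    let g : (Bus → ℝ) → (Bus → ℝ) → ℝ := fun θ0 θ =>
      ∑ n : Bus, (lam n * (∑ e ∈ Lines.filter (fun e => e.1 = n),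
            Bsus e.1 e.2 * (θ0 e.1 - θ0 e.2))
        - nu n * (∑ e ∈ Lines.filter (fun e => e.1 = n),
            Bsus e.1 e.2 * (θ0 e.1 - θ e.1 - θ0 e.2 + θ e.2)))
    -- (a) the voltage angles (δ0, δ) minimize g over the line-feasible pairs
    (∀ θ0 θ : Bus → ℝ,
        (∀ e ∈ Lines, Bsus e.1 e.2 * (θ0 e.1 - θ0 e.2) ≤ Cap e) →
        (∀ e ∈ Lines, Bsus e.1 e.2 * (θ e.1 - θ e.2) ≤ Cap e) →
        g δ0 δ ≤ g θ0 θ)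
    -- (b) hence g(δ0, δ) ≤ 0 and the merchandising surplus Γ₁ = -g(δ0, δ) ≥ 0
    ∧ g δ0 δ ≤ 0
    ∧ ((∑ n : Bus, lam n * ((∑ j ∈ univ.filter (fun j => bJ j = n), Ld j)
            - (∑ i ∈ univ.filter (fun i => bI i = n), p i) - wsch n))
        - (∑ n : Bus, nu n * ((∑ i ∈ univ.filter (fun i => bI i = n), (ru i - rd i))
            + (∑ j ∈ univ.filter (fun j => bJ j = n), s j) + Wf n - wsch n - wspi n))
        = -g δ0 δ)
    ∧ 0 ≤ (∑ n : Bus, lam n * ((∑ j ∈ univ.filter (fun j => bJ j = n), Ld j)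
            - (∑ i ∈ univ.filter (fun i => bI i = n), p i) - wsch n))
        - (∑ n : Bus, nu n * ((∑ i ∈ univ.filter (fun i => bI i = n), (ru i - rd i))
            + (∑ j ∈ univ.filter (fun j => bJ j = n), s j) + Wf n - wsch n - wspi n)) := by
  intro g
  -- key telescoping identity for the δ0-duals
  have key0 : ∀ θ0 : Bus → ℝ,
      (∑ e ∈ Lines, (lam e.1 - nu e.1) * (Bsus e.1 e.2 * (θ0 e.1 - θ0 e.2)))
        = -∑ e ∈ Lines, η0 e * (Bsus e.1 e.2 * (θ0 e.1 - θ0 e.2)) := by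
    intro θ0
    have h0 : ∀ n : Bus,
        (∑ e ∈ Lines.filter (fun e => e.1 = n),
            Bsus e.1 e.2 * (lam e.1 - nu e.1 + η0 e))
          - (∑ e ∈ Lines.filter (fun e => e.2 = n),
            Bsus e.1 e.2 * (lam e.1 - nu e.1 + η0 e)) = 0 := by
      intro n
      have h := dfδ0 n
      have hcongr : (∑ e ∈ Lines.filter (fun e => e.1 = n),
          Bsus e.1 e.2 * (lam n - nu n + η0 e))
          = ∑ e ∈ Lines.filter (fun e => e.1 = n),
            Bsus e.1 e.2 * (lam e.1 - nu e.1 + η0 e) :=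
        Finset.sum_congr rfl fun e he => by rw [(Finset.mem_filter.1 he).2]
      rw [hcongr] at h
      exact h
    have hz : (∑ n : Bus, θ0 n * ∑ e ∈ Lines.filter (fun e => e.1 = n),
          Bsus e.1 e.2 * (lam e.1 - nu e.1 + η0 e))
        - (∑ n : Bus, θ0 n * ∑ e ∈ Lines.filter (fun e => e.2 = n),
          Bsus e.1 e.2 * (lam e.1 - nu e.1 + η0 e)) = 0 := by
      rw [← Finset.sum_sub_distrib]
      refine Finset.sum_eq_zero fun n _ => ?_
      rw [← mul_sub, h0 n, mul_zero]
    rw [fiber_sum_fst, fiber_sum_snd, ← Finset.sum_sub_distrib] at hz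
    have hz' : ∑ e ∈ Lines,
        ((lam e.1 - nu e.1) * (Bsus e.1 e.2 * (θ0 e.1 - θ0 e.2))
          + η0 e * (Bsus e.1 e.2 * (θ0 e.1 - θ0 e.2))) = 0 :=
      (Finset.sum_congr rfl fun e _ => by ring).trans hz
    rw [Finset.sum_add_distrib] at hz'
    linarith
  -- key telescoping identity for the δ-duals
  have key1 : ∀ θ : Bus → ℝ,
      (∑ e ∈ Lines, nu e.1 * (Bsus e.1 e.2 * (θ e.1 - θ e.2)))
        = -∑ e ∈ Lines, η e * (Bsus e.1 e.2 * (θ e.1 - θ e.2)) := by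
    intro θ
    have h0 : ∀ n : Bus,
        (∑ e ∈ Lines.filter (fun e => e.1 = n), Bsus e.1 e.2 * (nu e.1 + η e))
          - (∑ e ∈ Lines.filter (fun e => e.2 = n),
            Bsus e.1 e.2 * (nu e.1 + η e)) = 0 := by
      intro n
      have h := dfδ n
      have hcongr : (∑ e ∈ Lines.filter (fun e => e.1 = n),
          Bsus e.1 e.2 * (nu n + η e))
          = ∑ e ∈ Lines.filter (fun e => e.1 = n), Bsus e.1 e.2 * (nu e.1 + η e) :=
        Finset.sum_congr rfl fun e he => by rw [(Finset.mem_filter.1 he).2]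
      rw [hcongr] at h
      exact h
    have hz : (∑ n : Bus, θ n * ∑ e ∈ Lines.filter (fun e => e.1 = n),
          Bsus e.1 e.2 * (nu e.1 + η e))
        - (∑ n : Bus, θ n * ∑ e ∈ Lines.filter (fun e => e.2 = n),
          Bsus e.1 e.2 * (nu e.1 + η e)) = 0 := by
      rw [← Finset.sum_sub_distrib]
      refine Finset.sum_eq_zero fun n _ => ?_
      rw [← mul_sub, h0 n, mul_zero]
    rw [fiber_sum_fst, fiber_sum_snd, ← Finset.sum_sub_distrib] at hz
    have hz' : ∑ e ∈ Lines,
        (nu e.1 * (Bsus e.1 e.2 * (θ e.1 - θ e.2))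
          + η e * (Bsus e.1 e.2 * (θ e.1 - θ e.2))) = 0 :=
      (Finset.sum_congr rfl fun e _ => by ring).trans hz
    rw [Finset.sum_add_distrib] at hz'
    linarith
  -- closed form for g
  have hg : ∀ θ0 θ : Bus → ℝ, g θ0 θ
      = -∑ e ∈ Lines, (η0 e * (Bsus e.1 e.2 * (θ0 e.1 - θ0 e.2))
          + η e * (Bsus e.1 e.2 * (θ e.1 - θ e.2))) := by
    intro θ0 θ
    have split : ∀ n : Bus, (∑ e ∈ Lines.filter (fun e => e.1 = n),
        Bsus e.1 e.2 * (θ0 e.1 - θ e.1 - θ0 e.2 + θ e.2))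
        = (∑ e ∈ Lines.filter (fun e => e.1 = n), Bsus e.1 e.2 * (θ0 e.1 - θ0 e.2))
          - (∑ e ∈ Lines.filter (fun e => e.1 = n),
            Bsus e.1 e.2 * (θ e.1 - θ e.2)) := by
      intro n
      rw [← Finset.sum_sub_distrib]
      exact Finset.sum_congr rfl fun e _ => by ring
    calc g θ0 θ
        = ∑ n : Bus, ((lam n - nu n) * (∑ e ∈ Lines.filter (fun e => e.1 = n),
            Bsus e.1 e.2 * (θ0 e.1 - θ0 e.2))
          + nu n * (∑ e ∈ Lines.filter (fun e => e.1 = n),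
            Bsus e.1 e.2 * (θ e.1 - θ e.2))) :=
          Finset.sum_congr rfl fun n _ => by rw [split n]; ring
      _ = (∑ n : Bus, (lam n - nu n) * (∑ e ∈ Lines.filter (fun e => e.1 = n),
            Bsus e.1 e.2 * (θ0 e.1 - θ0 e.2)))
          + ∑ n : Bus, nu n * (∑ e ∈ Lines.filter (fun e => e.1 = n),
            Bsus e.1 e.2 * (θ e.1 - θ e.2)) := Finset.sum_add_distrib
      _ = (∑ e ∈ Lines, (lam e.1 - nu e.1) * (Bsus e.1 e.2 * (θ0 e.1 - θ0 e.2)))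
          + ∑ e ∈ Lines, nu e.1 * (Bsus e.1 e.2 * (θ e.1 - θ e.2)) := by
          rw [fiber_sum_fst, fiber_sum_fst]
      _ = (-∑ e ∈ Lines, η0 e * (Bsus e.1 e.2 * (θ0 e.1 - θ0 e.2)))
          + -∑ e ∈ Lines, η e * (Bsus e.1 e.2 * (θ e.1 - θ e.2)) := by
          rw [key0 θ0, key1 θ]
      _ = -∑ e ∈ Lines, (η0 e * (Bsus e.1 e.2 * (θ0 e.1 - θ0 e.2))
          + η e * (Bsus e.1 e.2 * (θ e.1 - θ e.2))) := by
          rw [Finset.sum_add_distrib]; ring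
  -- value of g at the optimal angles
  have hgδ : g δ0 δ = -∑ e ∈ Lines, (η0 e * Cap e + η e * Cap e) := by
    rw [hg]
    congr 1
    exact Finset.sum_congr rfl fun e he => by
      linear_combination -(csη0 e he) - (csη e he)
  -- (a)
  have parta : ∀ θ0 θ : Bus → ℝ,
      (∀ e ∈ Lines, Bsus e.1 e.2 * (θ0 e.1 - θ0 e.2) ≤ Cap e) →
      (∀ e ∈ Lines, Bsus e.1 e.2 * (θ e.1 - θ e.2) ≤ Cap e) →
      g δ0 δ ≤ g θ0 θ := by
    intro θ0 θ hθ0 hθ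
    rw [hgδ, hg θ0 θ, neg_le_neg_iff]
    refine Finset.sum_le_sum fun e he => ?_
    exact add_le_add (mul_le_mul_of_nonneg_left (hθ0 e he) (hη0 e he))
      (mul_le_mul_of_nonneg_left (hθ e he) (hη e he))
  -- (b)
  have partb : g δ0 δ ≤ 0 := by
    rw [hgδ, neg_nonpos]
    exact Finset.sum_nonneg fun e he =>
      add_nonneg (mul_nonneg (hη0 e he) (hCap e he))
        (mul_nonneg (hη e he) (hCap e he))
  -- (c)
  have partc : (∑ n : Bus, lam n * ((∑ j ∈ univ.filter (fun j => bJ j = n), Ld j)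
            - (∑ i ∈ univ.filter (fun i => bI i = n), p i) - wsch n))
        - (∑ n : Bus, nu n * ((∑ i ∈ univ.filter (fun i => bI i = n), (ru i - rd i))
            + (∑ j ∈ univ.filter (fun j => bJ j = n), s j) + Wf n - wsch n - wspi n))
        = -g δ0 δ := by
    have e1 : (∑ n : Bus, lam n * ((∑ j ∈ univ.filter (fun j => bJ j = n), Ld j)
            - (∑ i ∈ univ.filter (fun i => bI i = n), p i) - wsch n))
        = ∑ n : Bus, lam n * (-(∑ e ∈ Lines.filter (fun e => e.1 = n),
            Bsus e.1 e.2 * (δ0 e.1 - δ0 e.2))) :=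
      Finset.sum_congr rfl fun n _ => by
        have := hbal0 n; rw [show ((∑ j ∈ univ.filter (fun j => bJ j = n), Ld j)
            - (∑ i ∈ univ.filter (fun i => bI i = n), p i) - wsch n)
          = -(∑ e ∈ Lines.filter (fun e => e.1 = n),
            Bsus e.1 e.2 * (δ0 e.1 - δ0 e.2)) by linarith]
    have e2 : (∑ n : Bus, nu n * ((∑ i ∈ univ.filter (fun i => bI i = n), (ru i - rd i))
            + (∑ j ∈ univ.filter (fun j => bJ j = n), s j) + Wf n - wsch n - wspi n))
        = ∑ n : Bus, nu n * (-(∑ e ∈ Lines.filter (fun e => e.1 = n),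
            Bsus e.1 e.2 * (δ0 e.1 - δ e.1 - δ0 e.2 + δ e.2))) :=
      Finset.sum_congr rfl fun n _ => by
        have := hbal1 n; rw [show ((∑ i ∈ univ.filter (fun i => bI i = n), (ru i - rd i))
            + (∑ j ∈ univ.filter (fun j => bJ j = n), s j) + Wf n - wsch n - wspi n)
          = -(∑ e ∈ Lines.filter (fun e => e.1 = n),
            Bsus e.1 e.2 * (δ0 e.1 - δ e.1 - δ0 e.2 + δ e.2)) by linarith]
    rw [e1, e2]
    show _ = -(∑ n : Bus, (lam n * (∑ e ∈ Lines.filter (fun e => e.1 = n),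
            Bsus e.1 e.2 * (δ0 e.1 - δ0 e.2))
        - nu n * (∑ e ∈ Lines.filter (fun e => e.1 = n),
            Bsus e.1 e.2 * (δ0 e.1 - δ e.1 - δ0 e.2 + δ e.2))))
    rw [← Finset.sum_neg_distrib, ← Finset.sum_sub_distrib]
    exact Finset.sum_congr rfl fun n _ => by ring
  exact ⟨parta, partb, partc, by rw [partc]; linarith⟩
end
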